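/- arXiv:1307.2808 — 6 statements merged into one kernel-verified Lean document; each statement's English description precedes it below -/
import Mathlib

section
/- Let j ≠ j' be two dangerous clients with r_j = r_{j'} = r, d_max(j) > 0, d_max(j') > 0, that do not conflict (i.e., d(j,j') > 6·max{d_av(j), d_av(j')}). Then d(j,j') ≥ d_max(j)/10 + d_max(j')/10. -/
open scoped BigOperators

/-- A fractional solution to a fault-tolerant k-median instance: facilities `F`,
clients `C`, requirements `req`, fractional openings `y`, and for each client `j`
a set `Fj j` of the closest `req j` volume of facilities. -/
structure FracSol (X : Type*) [MetricSpace X] where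
  F : Finset X
  C : Finset X
  req : X → ℕ
  y : X → ℝ
  Fj : X → Finset X
  req_pos : ∀ j ∈ C, 0 < req j
  y_pos : ∀ i ∈ F, 0 < y i
  y_le_one : ∀ i ∈ F, y i ≤ 1
  Fj_sub : ∀ j ∈ C, Fj j ⊆ F
  Fj_vol : ∀ j ∈ C, ∑ i ∈ Fj j, y i = (req j : ℝ)
  Fj_closest : ∀ j ∈ C, ∀ i ∈ Fj j, ∀ i' ∈ F, i' ∉ Fj j → dist j i ≤ dist j i'

namespace FracSol

variable {X : Type*} [MetricSpace X]

/-- The quantile (generalized inverse CDF) function `q_j` of the distances from `j`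
to the facilities of `F_j`, weighted by `y`: for `x ∈ (s_{l-1}, s_l]` it equals
`d(j, i_l)`, where facilities are sorted by distance to `j`. -/
noncomputable def q (s : FracSol X) (j : X) (x : ℝ) : ℝ :=
  sInf {D : ℝ | x ≤ ∑ i ∈ (s.Fj j).filter (fun i => dist j i ≤ D), s.y i}

/-- `d_av^t(j) = ∫_{t-1}^{t} q_j(x) dx`. -/
noncomputable def davT (s : FracSol X) (j : X) (t : ℕ) : ℝ :=
  ∫ u in ((t : ℝ) - 1)..(t : ℝ), s.q j u

/-- `d_max^t(j) = q_j(t)`. -/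
noncomputable def dmaxT (s : FracSol X) (j : X) (t : ℕ) : ℝ := s.q j (t : ℝ)

/-- `d_av(j) = (1/r_j) ∫_0^{r_j} q_j(x) dx`. -/
noncomputable def dav (s : FracSol X) (j : X) : ℝ :=
  (1 / (s.req j : ℝ)) * ∫ u in (0 : ℝ)..((s.req j : ℝ)), s.q j u

/-- `d_max(j) = q_j(r_j)`, the maximum distance from `j` to `F_j`. -/
noncomputable def dmax (s : FracSol X) (j : X) : ℝ := s.q j ((s.req j : ℝ))

/-- `Ball(j, L) = {i ∈ F : d(i,j) ≤ L}`. -/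
noncomputable def ball (s : FracSol X) (j : X) (L : ℝ) : Finset X :=
  s.F.filter (fun i => dist i j ≤ L)

/-- `B_j = Ball(j, d_max(j)/15)`. -/
noncomputable def Bset (s : FracSol X) (j : X) : Finset X := s.ball j (s.dmax j / 15)

/-- `y(S) = ∑_{i ∈ S} y_i`. -/
noncomputable def vol (s : FracSol X) (S : Finset X) : ℝ := ∑ i ∈ S, s.y i

/-- A client `j` is dangerous if `d_max(j) ≥ 45 d_av^{r_j}(j)`. -/
def Dangerous (s : FracSol X) (j : X) : Prop :=
  j ∈ s.C ∧ 45 * s.davT j (s.req j) ≤ s.dmax j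

/-- Two distinct dangerous clients conflict if they have the same requirement and
`d(j,j') ≤ 6 max{d_av(j), d_av(j')}`. -/
def Conflict (s : FracSol X) (j j' : X) : Prop :=
  j ≠ j' ∧ s.req j = s.req j' ∧ dist j j' ≤ 6 * max (s.dav j) (s.dav j')

/-- `d_av(j, S) = (∑_{i∈S} d(j,i) y_i) / y(S)`. -/
noncomputable def davS (s : FracSol X) (j : X) (S : Finset X) : ℝ :=
  (∑ i ∈ S, dist j i * s.y i) / s.vol S

/-- Sum of the `r` smallest values among the multiset `{d(j,i) : i ∈ S}`. -/
noncomputable def kSmallestSum (j : X) (S : Finset X) (r : ℕ) : ℝ :=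
  (((S.val.map fun i => dist j i).sort (· ≤ ·)).take r).sum

end FracSol

namespace FracSol

variable {X : Type*} [MetricSpace X]

/-- Sums of `y` over subsets of `F_j` are nonnegative. -/
lemma aux_sum_nonneg (s : FracSol X) {j : X} (hj : j ∈ s.C) {S : Finset X}
    (hS : S ⊆ s.Fj j) : 0 ≤ ∑ i ∈ S, s.y i :=
  Finset.sum_nonneg fun i hi => (s.y_pos i (s.Fj_sub j hj (hS hi))).le

lemma aux_T_bddBelow (s : FracSol X) (j : X) {x : ℝ} (hx : 0 < x) :
    BddBelow {D : ℝ | x ≤ ∑ i ∈ (s.Fj j).filter (fun i => dist j i ≤ D), s.y i} := by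
  refine ⟨0, fun D hD => ?_⟩
  by_contra hD0
  push_neg at hD0
  have hfil : (s.Fj j).filter (fun i => dist j i ≤ D) = ∅ := by
    rw [Finset.filter_eq_empty_iff]
    intro i _ hle
    exact absurd (dist_nonneg.trans hle) (not_le.mpr hD0)
  have : x ≤ 0 := by simpa [hfil] using hD
  linarith

lemma aux_T_nonempty (s : FracSol X) {j : X} (hj : j ∈ s.C) {x : ℝ}
    (hx : x ≤ (s.req j : ℝ)) :
    Set.Nonempty {D : ℝ | x ≤ ∑ i ∈ (s.Fj j).filter (fun i => dist j i ≤ D), s.y i} := by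
  rcases (s.Fj j).eq_empty_or_nonempty with h | h
  · refine ⟨0, ?_⟩
    have h0 : ((s.req j : ℝ)) = 0 := by rw [← s.Fj_vol j hj, h, Finset.sum_empty]
    simp only [Set.mem_setOf_eq, h, Finset.filter_empty, Finset.sum_empty]
    linarith [hx.trans_eq h0]
  · refine ⟨(s.Fj j).sup' h (fun i => dist j i), ?_⟩
    have hfil : (s.Fj j).filter (fun i => dist j i ≤ (s.Fj j).sup' h (fun i => dist j i))
        = s.Fj j := Finset.filter_true_of_mem (fun i hi => Finset.le_sup' _ hi)
    simp only [Set.mem_setOf_eq, hfil, s.Fj_vol j hj]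
    exact hx

lemma aux_q_nonneg (s : FracSol X) {j : X} (hj : j ∈ s.C) (x : ℝ) : 0 ≤ s.q j x := by
  rcases le_or_gt x 0 with hx | hx
  · have huniv : {D : ℝ | x ≤ ∑ i ∈ (s.Fj j).filter (fun i => dist j i ≤ D), s.y i}
        = Set.univ := by
      refine Set.eq_univ_of_forall fun D => ?_
      exact hx.trans (s.aux_sum_nonneg hj (Finset.filter_subset _ _))
    rw [q, huniv, Real.sInf_of_not_bddBelow (by simpa using not_bddBelow_univ)]
  · exact Real.sInf_nonneg fun D hD => by
      by_contra hD0
      push_neg at hD0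
      have hfil : (s.Fj j).filter (fun i => dist j i ≤ D) = ∅ := by
        rw [Finset.filter_eq_empty_iff]
        intro i _ hle
        exact absurd (dist_nonneg.trans hle) (not_le.mpr hD0)
      have : x ≤ 0 := by simpa [hfil] using hD
      linarith

lemma aux_q_mono (s : FracSol X) {j : X} (hj : j ∈ s.C) :
    MonotoneOn (s.q j) (Set.Icc 0 ((s.req j : ℝ))) := by
  intro x hx x' hx' hle
  rcases eq_or_lt_of_le hx.1 with h0 | h0
  · have : s.q j x = 0 := by
      have huniv : {D : ℝ | x ≤ ∑ i ∈ (s.Fj j).filter (fun i => dist j i ≤ D), s.y i}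
          = Set.univ := by
        refine Set.eq_univ_of_forall fun D => ?_
        exact le_of_eq_of_le h0.symm (s.aux_sum_nonneg hj (Finset.filter_subset _ _))
      rw [q, huniv, Real.sInf_of_not_bddBelow (by simpa using not_bddBelow_univ)]
    rw [this]
    exact s.aux_q_nonneg hj x'
  · refine csInf_le_csInf (s.aux_T_bddBelow j h0) (s.aux_T_nonempty hj hx'.2) ?_
    intro D hD
    exact le_trans hle hD

/-- If `q_j(x) < c` with `0 < x ≤ r_j`, then at least `x` volume of facilities is
within distance `< c` of `j`. -/
lemma aux_vol_lb (s : FracSol X) {j : X} (hj : j ∈ s.C) {x c : ℝ}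
    (hx0 : 0 < x) (hxr : x ≤ (s.req j : ℝ)) (hq : s.q j x < c) :
    x ≤ ∑ i ∈ s.F.filter (fun i => dist j i < c), s.y i := by
  obtain ⟨D, hD, hDc⟩ := exists_lt_of_csInf_lt (s.aux_T_nonempty hj hxr) hq
  refine le_trans hD (Finset.sum_le_sum_of_subset_of_nonneg ?_ ?_)
  · intro i hi
    rw [Finset.mem_filter] at hi ⊢
    exact ⟨s.Fj_sub j hj hi.1, lt_of_le_of_lt hi.2 hDc⟩
  · intro i hi _
    exact (s.y_pos i (Finset.mem_filter.mp hi).1).le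

/-- There is a facility in `F_j` at distance at least `d_max(j)` from `j`. -/
lemma aux_far_facility (s : FracSol X) {j : X} (hj : j ∈ s.C) :
    ∃ i₀ ∈ s.Fj j, s.dmax j ≤ dist j i₀ := by
  have hr1 : (1 : ℝ) ≤ (s.req j : ℝ) := by exact_mod_cast s.req_pos j hj
  have hne : (s.Fj j).Nonempty := by
    rcases (s.Fj j).eq_empty_or_nonempty with h | h
    · exfalso
      have h0 : ((s.req j : ℝ)) = 0 := by rw [← s.Fj_vol j hj, h, Finset.sum_empty]
      linarith
    · exact h
  obtain ⟨i₀, hi₀, hsup⟩ := Finset.exists_mem_eq_sup' hne (fun i => dist j i)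
  refine ⟨i₀, hi₀, ?_⟩
  rw [← hsup]
  have hmem : (s.Fj j).sup' hne (fun i => dist j i) ∈
      {D : ℝ | (s.req j : ℝ) ≤ ∑ i ∈ (s.Fj j).filter (fun i => dist j i ≤ D), s.y i} := by
    have hfil : (s.Fj j).filter
        (fun i => dist j i ≤ (s.Fj j).sup' hne (fun i => dist j i)) = s.Fj j :=
      Finset.filter_true_of_mem (fun i hi => Finset.le_sup' _ hi)
    simp only [Set.mem_setOf_eq, hfil, s.Fj_vol j hj, le_refl]
  exact csInf_le (s.aux_T_bddBelow j (by linarith)) hmem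

/-- Every facility strictly closer to `j` than `d_max(j)` belongs to `F_j`. -/
lemma aux_near_mem_Fj (s : FracSol X) {j : X} (hj : j ∈ s.C) {i : X}
    (hiF : i ∈ s.F) (hd : dist j i < s.dmax j) : i ∈ s.Fj j := by
  by_contra hnot
  obtain ⟨i₀, hi₀, hfar⟩ := s.aux_far_facility hj
  have := s.Fj_closest j hj i₀ hi₀ i hiF hnot
  linarith

/-- Markov-type bound: if `d_av(j) < e/6` then `q_j(r/2) < e/3`. -/
lemma aux_q_half (s : FracSol X) {j : X} (hj : j ∈ s.C) {e : ℝ}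
    (hdav : s.dav j < e / 6) : s.q j ((s.req j : ℝ) / 2) < e / 3 := by
  set R : ℝ := (s.req j : ℝ) with hR
  have hr1 : (1 : ℝ) ≤ R := by
    have := s.req_pos j hj
    rw [hR]
    exact_mod_cast this
  have hR0 : (0 : ℝ) < R := by linarith
  have hmono : MonotoneOn (s.q j) (Set.Icc 0 R) := s.aux_q_mono hj
  have hInt : IntervalIntegrable (s.q j) MeasureTheory.volume 0 R :=
    (hmono.mono (by rw [Set.uIcc_of_le hR0.le])).intervalIntegrable
  have hsub1 : Set.uIcc 0 (R/2) ⊆ Set.Icc 0 R := by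
    rw [Set.uIcc_of_le (by linarith : (0:ℝ) ≤ R/2)]
    exact Set.Icc_subset_Icc le_rfl (by linarith)
  have hsub2 : Set.uIcc (R/2) R ⊆ Set.Icc 0 R := by
    rw [Set.uIcc_of_le (by linarith : R/2 ≤ R)]
    exact Set.Icc_subset_Icc (by linarith) le_rfl
  have hInt1 : IntervalIntegrable (s.q j) MeasureTheory.volume 0 (R / 2) :=
    (hmono.mono hsub1).intervalIntegrable
  have hInt2 : IntervalIntegrable (s.q j) MeasureTheory.volume (R / 2) R :=
    (hmono.mono hsub2).intervalIntegrable
  have hIeq : (∫ u in (0:ℝ)..R, s.q j u) = R * s.dav j := by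
    rw [dav, ← hR]
    field_simp
  have hsplit : (∫ u in (0:ℝ)..(R/2), s.q j u) + (∫ u in (R/2)..R, s.q j u)
      = ∫ u in (0:ℝ)..R, s.q j u :=
    intervalIntegral.integral_add_adjacent_intervals hInt1 hInt2
  have h0 : 0 ≤ ∫ u in (0:ℝ)..(R/2), s.q j u :=
    intervalIntegral.integral_nonneg (by linarith) (fun u _ => s.aux_q_nonneg hj u)
  have hconst : (∫ _u in (R/2)..R, s.q j (R/2)) = (R - R/2) * s.q j (R/2) := by
    rw [intervalIntegral.integral_const, smul_eq_mul]
  have hlow : (R - R/2) * s.q j (R/2) ≤ ∫ u in (R/2)..R, s.q j u := by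
    rw [← hconst]
    refine intervalIntegral.integral_mono_on (by linarith) intervalIntegrable_const hInt2 ?_
    intro u hu
    exact hmono ⟨by linarith, by linarith [hu.1]⟩ ⟨by linarith [hu.1], hu.2⟩ hu.1
  have hI_lt : (∫ u in (0:ℝ)..R, s.q j u) < R * (e / 6) := by
    rw [hIeq]
    exact (mul_lt_mul_iff_right₀ hR0).mpr hdav
  have hkey : (R/2) * s.q j (R/2) < R * (e / 6) := by nlinarith
  nlinarith [hkey, hR0]

/-- The main argument, assuming `d_max(j') ≤ d_max(j)`. -/
lemma aux_key (s : FracSol X) (j j' : X) (hne : j ≠ j')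
    (hj : j ∈ s.C) (hj' : j' ∈ s.C)
    (r : ℕ) (hr : s.req j = r) (hr' : s.req j' = r)
    (hnc : 6 * max (s.dav j) (s.dav j') < dist j j')
    (hdle : s.dmax j' ≤ s.dmax j)
    (hlt : dist j j' < s.dmax j / 10 + s.dmax j' / 10) : False := by
  classical
  set d : ℝ := dist j j' with hd
  set M : ℝ := s.dmax j with hM
  have hd0 : 0 < d := dist_pos.mpr hne
  have hdM : d < M / 5 := by linarith
  have hdavj : s.dav j < d / 6 := by
    have := le_max_left (s.dav j) (s.dav j')
    linarith
  have hdavj' : s.dav j' < d / 6 := by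
    have := le_max_right (s.dav j) (s.dav j')
    linarith
  have hRr : (s.req j : ℝ) = (r : ℝ) := by rw [hr]
  have hRr' : (s.req j' : ℝ) = (r : ℝ) := by rw [hr']
  have hr1 : (1 : ℝ) ≤ (r : ℝ) := by
    have := s.req_pos j hj
    rw [hr] at this
    exact_mod_cast this
  -- volume bounds
  have hqj : s.q j ((r : ℝ) / 2) < d / 3 := by
    have := s.aux_q_half hj (e := d) hdavj
    rwa [hRr] at this
  have hqj' : s.q j' ((r : ℝ) / 2) < d / 3 := by
    have := s.aux_q_half hj' (e := d) hdavj'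
    rwa [hRr'] at this
  set A : Finset X := s.F.filter (fun i => dist j i < d / 3) with hA
  set A' : Finset X := s.F.filter (fun i => dist j' i < d / 3) with hA'
  have hvolA : (r : ℝ) / 2 ≤ ∑ i ∈ A, s.y i := by
    have := s.aux_vol_lb hj (x := (r:ℝ)/2) (c := d/3) (by linarith)
      (by rw [hRr]; linarith) hqj
    exact this
  have hvolA' : (r : ℝ) / 2 ≤ ∑ i ∈ A', s.y i := by
    have := s.aux_vol_lb hj' (x := (r:ℝ)/2) (c := d/3) (by linarith)
      (by rw [hRr']; linarith) hqj'
    exact this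
  obtain ⟨i₀, hi₀, hfar⟩ := s.aux_far_facility hj
  -- both A and A' are inside Fj j
  have hAsub : A ⊆ s.Fj j := by
    intro i hi
    rw [hA, Finset.mem_filter] at hi
    exact s.aux_near_mem_Fj hj hi.1 (by rw [← hM]; linarith [hi.2])
  have hA'sub : A' ⊆ s.Fj j := by
    intro i hi
    rw [hA', Finset.mem_filter] at hi
    have htri : dist j i ≤ d + dist j' i := by
      rw [hd]
      exact dist_triangle j j' i
    exact s.aux_near_mem_Fj hj hi.1 (by rw [← hM]; linarith [hi.2])
  have hdisj : Disjoint A A' := by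
    rw [Finset.disjoint_left]
    intro i hiA hiA'
    rw [hA, Finset.mem_filter] at hiA
    rw [hA', Finset.mem_filter] at hiA'
    have : d ≤ dist j i + dist j' i := by
      rw [hd, dist_comm j' i]
      exact dist_triangle j i j'
    linarith [hiA.2, hiA'.2]
  have hi₀A : i₀ ∉ A ∪ A' := by
    rw [Finset.mem_union, hA, hA', Finset.mem_filter, Finset.mem_filter]
    push_neg
    have htri : dist j i₀ ≤ d + dist j' i₀ := by
      rw [hd]
      exact dist_triangle j j' i₀
    constructor
    · intro _
      linarith
    · intro _
      linarith
  have hsub : insert i₀ (A ∪ A') ⊆ s.Fj j := by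
    intro i hi
    rw [Finset.mem_insert, Finset.mem_union] at hi
    rcases hi with h | h | h
    · rwa [h]
    · exact hAsub h
    · exact hA'sub h
  have hy₀ : 0 < s.y i₀ := s.y_pos i₀ (s.Fj_sub j hj hi₀)
  have hsum : ∑ i ∈ insert i₀ (A ∪ A'), s.y i ≤ ∑ i ∈ s.Fj j, s.y i :=
    Finset.sum_le_sum_of_subset_of_nonneg hsub
      (fun i hi _ => (s.y_pos i (s.Fj_sub j hj hi)).le)
  rw [Finset.sum_insert hi₀A, Finset.sum_union hdisj, s.Fj_vol j hj, hRr] at hsum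
  linarith

end FracSol
open FracSol in
/-- Lemma 3 of the paper: two distinct non-conflicting dangerous clients with the same
requirement are far apart: `d(j,j') ≥ d_max(j)/10 + d_max(j')/10`. -/
theorem dangerous_clients_far_away {X : Type*} [MetricSpace X]
    (s : FracSol X) (j j' : X) (hne : j ≠ j')
    (hd : s.Dangerous j) (hd' : s.Dangerous j')
    (r : ℕ) (hr : s.req j = r) (hr' : s.req j' = r)
    (h1 : 0 < s.dmax j) (h2 : 0 < s.dmax j')
    (hnc : 6 * max (s.dav j) (s.dav j') < dist j j') :
    s.dmax j / 10 + s.dmax j' / 10 ≤ dist j j' := by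
  by_contra h
  push_neg at h
  rcases le_total (s.dmax j') (s.dmax j) with hc | hc
  · exact s.aux_key j j' hne hd.1 hd'.1 r hr hr' hnc hc h
  · refine s.aux_key j' j hne.symm hd'.1 hd.1 r hr' hr ?_ hc ?_
    · rwa [max_comm, dist_comm]
    · rw [dist_comm]
      linarith
end

section
/- Let j and j' be two dangerous clients with r = r_j > r' = r_{j'} and d_max(j') > 0, and suppose d(j,j') ≤ d_max(j)/15 + d_max(j')/10. Then d_max(j') ≤ d_max(j)/6. -/
open scoped BigOperators

namespace FracSol

variable {X : Type*} [MetricSpace X]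

/-- Auxiliary: volume of facilities of `F_j` within distance `D` of `j`. -/
noncomputable def volLe (s : FracSol X) (j : X) (D : ℝ) : ℝ :=
  ∑ i ∈ (s.Fj j).filter (fun i => dist j i ≤ D), s.y i

lemma q_eq_sInf (s : FracSol X) (j : X) (x : ℝ) :
    s.q j x = sInf {D : ℝ | x ≤ s.volLe j D} := rfl

lemma q_set_bddBelow (s : FracSol X) (j : X) {x : ℝ} (hx : 0 < x) :
    BddBelow {D : ℝ | x ≤ s.volLe j D} := by
  refine ⟨0, fun D hD => ?_⟩
  by_contra h
  push_neg at h
  have hemp : (s.Fj j).filter (fun i => dist j i ≤ D) = ∅ := by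
    refine Finset.filter_eq_empty_iff.mpr (fun i _ => ?_)
    have := dist_nonneg (x := j) (y := i)
    intro hle; linarith
  have : s.volLe j D = 0 := by rw [volLe, hemp]; simp
  rw [Set.mem_setOf_eq, this] at hD
  linarith

lemma q_set_nonempty (s : FracSol X) {j : X} (hj : j ∈ s.C) {x : ℝ}
    (hx : x ≤ (s.req j : ℝ)) :
    {D : ℝ | x ≤ s.volLe j D}.Nonempty := by
  obtain ⟨M, hM⟩ := Finset.exists_le ((s.Fj j).image (fun i => dist j i))
  refine ⟨M, ?_⟩
  have hfil : (s.Fj j).filter (fun i => dist j i ≤ M) = s.Fj j :=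
    Finset.filter_true_of_mem (fun i hi => hM _ (Finset.mem_image_of_mem _ hi))
  show x ≤ s.volLe j M
  rw [volLe, hfil, s.Fj_vol j hj]
  exact hx

lemma q_nonneg' (s : FracSol X) (j : X) {x : ℝ} (hx : 0 < x) : 0 ≤ s.q j x := by
  rw [q_eq_sInf]
  apply Real.sInf_nonneg
  intro D hD
  by_contra h
  push_neg at h
  have hemp : (s.Fj j).filter (fun i => dist j i ≤ D) = ∅ := by
    refine Finset.filter_eq_empty_iff.mpr (fun i _ => ?_)
    have := dist_nonneg (x := j) (y := i)
    intro hle; linarith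
  have : s.volLe j D = 0 := by rw [volLe, hemp]; simp
  rw [Set.mem_setOf_eq, this] at hD
  linarith

lemma q_mono' (s : FracSol X) {j : X} (hj : j ∈ s.C) {x x' : ℝ}
    (hx0 : 0 < x) (hle : x ≤ x') (hxr : x' ≤ (s.req j : ℝ)) :
    s.q j x ≤ s.q j x' := by
  rw [q_eq_sInf, q_eq_sInf]
  exact csInf_le_csInf (s.q_set_bddBelow j hx0) (s.q_set_nonempty hj hxr)
    (fun D hD => le_trans hle hD)

lemma q_le_of_forall_le (s : FracSol X) {j : X} (hj : j ∈ s.C) {x D : ℝ}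
    (hx0 : 0 < x) (hxr : x ≤ (s.req j : ℝ)) (h : ∀ i ∈ s.Fj j, dist j i ≤ D) :
    s.q j x ≤ D := by
  rw [q_eq_sInf]
  apply csInf_le (s.q_set_bddBelow j hx0)
  show x ≤ s.volLe j D
  rw [volLe, Finset.filter_true_of_mem h, s.Fj_vol j hj]
  exact hxr

lemma le_volLe_q (s : FracSol X) {j : X} (hj : j ∈ s.C) {x : ℝ}
    (hx0 : 0 < x) (hxr : x ≤ (s.req j : ℝ)) :
    x ≤ s.volLe j (s.q j x) := by
  by_contra h
  push_neg at h
  have hne : {D : ℝ | x ≤ s.volLe j D}.Nonempty := s.q_set_nonempty hj hxr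
  have hbdd : BddBelow {D : ℝ | x ≤ s.volLe j D} := s.q_set_bddBelow j hx0
  set E := (s.Fj j).filter (fun i => s.q j x < dist j i) with hE
  rcases E.eq_empty_or_nonempty with hEe | hEne
  · have hfil : (s.Fj j).filter (fun i => dist j i ≤ s.q j x) = s.Fj j := by
      refine Finset.filter_true_of_mem (fun i hi => ?_)
      by_contra hgt
      push_neg at hgt
      have : i ∈ E := Finset.mem_filter.mpr ⟨hi, hgt⟩
      rw [hEe] at this
      exact absurd this (Finset.notMem_empty i)
    have : s.volLe j (s.q j x) = (s.req j : ℝ) := by rw [volLe, hfil, s.Fj_vol j hj]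
    linarith
  · set δ := E.inf' hEne (fun i => dist j i) with hδ
    have hqδ : s.q j x < δ := by
      rw [hδ, Finset.lt_inf'_iff]
      intro i hi
      exact (Finset.mem_filter.mp hi).2
    rw [q_eq_sInf] at hqδ
    obtain ⟨D, hDA, hDδ⟩ := exists_lt_of_csInf_lt hne hqδ
    have hqD : s.q j x ≤ D := csInf_le hbdd hDA
    have hfeq : (s.Fj j).filter (fun i => dist j i ≤ D)
        = (s.Fj j).filter (fun i => dist j i ≤ s.q j x) := by
      ext i
      simp only [Finset.mem_filter]
      constructor
      · rintro ⟨hi, hle⟩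
        refine ⟨hi, ?_⟩
        by_contra hgt
        push_neg at hgt
        have hiE : i ∈ E := Finset.mem_filter.mpr ⟨hi, hgt⟩
        have : δ ≤ dist j i := Finset.inf'_le _ hiE
        linarith
      · rintro ⟨hi, hle⟩
        exact ⟨hi, hle.trans hqD⟩
    have : x ≤ s.volLe j (s.q j x) := by
      have hx' : x ≤ s.volLe j D := hDA
      rwa [volLe, hfeq, ← volLe] at hx'
    linarith

lemma vol_mono (s : FracSol X) {S T : Finset X} (hT : T ⊆ s.F) (hST : S ⊆ T) :
    s.vol S ≤ s.vol T :=
  Finset.sum_le_sum_of_subset_of_nonneg hST (fun i hi _ => (s.y_pos i (hT hi)).le)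

lemma markov (s : FracSol X) {j : X} (hj : j ∈ s.C) (hr : 2 ≤ s.req j) :
    s.q j ((s.req j : ℝ) - 1/2) ≤ 2 * s.davT j (s.req j) := by
  set r : ℝ := (s.req j : ℝ) with hrdef
  have hr2 : (2 : ℝ) ≤ r := by rw [hrdef]; exact_mod_cast hr
  have hmono : ∀ a b : ℝ, r - 1 ≤ a → a ≤ b → b ≤ r →
      MonotoneOn (s.q j) (Set.uIcc a b) := by
    intro a b ha hab hb
    rw [Set.uIcc_of_le hab]
    intro u hu v hv huv
    exact s.q_mono' hj (by linarith [hu.1]) huv (by rw [← hrdef]; linarith [hv.2])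
  have h1 : IntervalIntegrable (s.q j) MeasureTheory.volume (r - 1) (r - 1/2) :=
    (hmono _ _ le_rfl (by linarith) (by linarith)).intervalIntegrable
  have h2 : IntervalIntegrable (s.q j) MeasureTheory.volume (r - 1/2) r :=
    (hmono _ _ (by linarith) (by linarith) le_rfl).intervalIntegrable
  have hsplit : s.davT j (s.req j)
      = (∫ u in (r - 1)..(r - 1/2), s.q j u) + ∫ u in (r - 1/2)..r, s.q j u := by
    rw [davT, ← hrdef]
    exact (intervalIntegral.integral_add_adjacent_intervals h1 h2).symm
  have hA : 0 ≤ ∫ u in (r - 1)..(r - 1/2), s.q j u := by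
    apply intervalIntegral.integral_nonneg (by linarith)
    intro u hu
    exact s.q_nonneg' j (by rcases hu with ⟨hu1, _⟩; linarith)
  have hB : (1/2) * s.q j (r - 1/2) ≤ ∫ u in (r - 1/2)..r, s.q j u := by
    have hconst : ∫ _ in (r - 1/2)..r, s.q j (r - 1/2)
        = (r - (r - 1/2)) * s.q j (r - 1/2) := by
      rw [intervalIntegral.integral_const, smul_eq_mul]
    have := intervalIntegral.integral_mono_on (by linarith : r - 1/2 ≤ r)
      intervalIntegrable_const h2
      (fun u hu => s.q_mono' hj (by linarith) hu.1 hu.2)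
    rw [hconst] at this
    linarith
  rw [hsplit]
  linarith

end FracSol

open FracSol in
/-- Lemma 4 of the paper: if two dangerous clients with `r_j > r_{j'}` satisfy
`d(j,j') ≤ d_max(j)/15 + d_max(j')/10`, then `d_max(j') ≤ d_max(j)/6`. -/
theorem dangerous_geometrically_decrease {X : Type*} [MetricSpace X]
    (s : FracSol X) (j j' : X) (hd : s.Dangerous j) (hd' : s.Dangerous j')
    (hlt : s.req j' < s.req j) (h2 : 0 < s.dmax j')
    (hdist : dist j j' ≤ s.dmax j / 15 + s.dmax j' / 10) :
    s.dmax j' ≤ s.dmax j / 6 := by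
  classical
  by_contra hcon
  push_neg at hcon
  obtain ⟨hjC, hdang⟩ := hd
  obtain ⟨hj'C, _⟩ := hd'
  have hr'1 : 1 ≤ s.req j' := s.req_pos j' hj'C
  have hr2 : 2 ≤ s.req j := by omega
  have hrR : ((s.req j' : ℝ)) + 1 ≤ (s.req j : ℝ) := by exact_mod_cast hlt
  have hrR2 : (2 : ℝ) ≤ (s.req j : ℝ) := by exact_mod_cast hr2
  have hr'pos : (0 : ℝ) < (s.req j' : ℝ) := by exact_mod_cast hr'1
  set c := s.q j ((s.req j : ℝ) - 1/2) with hc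
  have hmark : c ≤ 2 * s.davT j (s.req j) := s.markov hjC hr2
  have hdmaxj0 : 0 ≤ s.dmax j := s.q_nonneg' j (by linarith)
  have hc45 : c ≤ 2 * s.dmax j / 45 := by
    have := hdang
    linarith
  set D := s.dmax j / 9 + s.dmax j' / 10 with hD
  have hvolc : (s.req j : ℝ) - 1/2 ≤ s.volLe j c :=
    s.le_volLe_q hjC (by linarith) (by linarith)
  have hTS : (s.Fj j).filter (fun i => dist j i ≤ c) ⊆ s.F.filter (fun i => dist j' i ≤ D) := by
    intro i hi
    rw [Finset.mem_filter] at hi ⊢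
    refine ⟨s.Fj_sub j hjC hi.1, ?_⟩
    have htri : dist j' i ≤ dist j' j + dist j i := dist_triangle j' j i
    have hcomm : dist j' j = dist j j' := dist_comm _ _
    have hdi : dist j i ≤ c := hi.2
    rw [hD]
    linarith
  have hSF : s.F.filter (fun i => dist j' i ≤ D) ⊆ s.F := Finset.filter_subset _ _
  have hvolS : (s.req j : ℝ) - 1/2 ≤ s.vol (s.F.filter (fun i => dist j' i ≤ D)) :=
    le_trans hvolc (s.vol_mono hSF hTS)
  have hforall : ∀ i ∈ s.Fj j', dist j' i ≤ D := by
    by_contra hcon2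
    push_neg at hcon2
    obtain ⟨i0, hi0, hi0D⟩ := hcon2
    have hsub : s.F.filter (fun i => dist j' i ≤ D) ⊆ s.Fj j' := by
      intro i' hi'
      rw [Finset.mem_filter] at hi'
      by_contra hnot
      have := s.Fj_closest j' hj'C i0 hi0 i' hi'.1 hnot
      linarith [hi'.2]
    have hle := s.vol_mono (s.Fj_sub j' hj'C) hsub
    have hvolFj' : s.vol (s.Fj j') = (s.req j' : ℝ) := s.Fj_vol j' hj'C
    rw [hvolFj'] at hle
    linarith
  have hfin : s.dmax j' ≤ D :=
    s.q_le_of_forall_le hj'C hr'pos le_rfl hforall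
  rw [hD] at hfin
  linarith
end

section
/- Let D' be a finite set of dangerous clients, each with d_max(j) > 0, such that no two distinct members of D' conflict. Then there exists a family {B'_j}_{j∈D'} of subsets of F such that (1) B_j ⊆ B'_j ⊆ Ball(j, d_max(j)/10) for every j ∈ D', and (2) the family {B'_j}_{j∈D'} is laminar, i.e., for any two distinct j, j' ∈ D', either B'_j ⊆ B'_{j'}, or B'_{j'} ⊆ B'_j, or B'_j ∩ B'_{j'} = ∅. -/
open scoped BigOperators

open scoped BigOperators

namespace LamAux

variable {X : Type*} [MetricSpace X] [DecidableEq X]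

/-- parametric quantile function -/
noncomputable def qq (y : X → ℝ) (j : X) (T : Finset X) (x : ℝ) : ℝ :=
  sInf {D : ℝ | x ≤ ∑ i ∈ T.filter (fun i => dist j i ≤ D), y i}

variable {y : X → ℝ} {j : X} {T : Finset X}

lemma V_nonneg (hy : ∀ i ∈ T, 0 < y i) (D : ℝ) :
    0 ≤ ∑ i ∈ T.filter (fun i => dist j i ≤ D), y i :=
  Finset.sum_nonneg fun i hi => (hy i (Finset.mem_filter.mp hi).1).le

lemma V_mono (hy : ∀ i ∈ T, 0 < y i) {D D' : ℝ} (h : D ≤ D') :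
    ∑ i ∈ T.filter (fun i => dist j i ≤ D), y i
      ≤ ∑ i ∈ T.filter (fun i => dist j i ≤ D'), y i := by
  apply Finset.sum_le_sum_of_subset_of_nonneg
  · intro i hi
    rw [Finset.mem_filter] at hi ⊢
    exact ⟨hi.1, le_trans hi.2 h⟩
  · intro i hi _; exact (hy i (Finset.mem_filter.mp hi).1).le

lemma V_le_vol (hy : ∀ i ∈ T, 0 < y i) (D : ℝ) :
    ∑ i ∈ T.filter (fun i => dist j i ≤ D), y i ≤ ∑ i ∈ T, y i := by
  apply Finset.sum_le_sum_of_subset_of_nonneg (Finset.filter_subset _ _)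
  intro i hi _; exact (hy i hi).le

lemma exists_bound (j : X) (T : Finset X) : ∃ D : ℝ, ∀ i ∈ T, dist j i ≤ D := by
  refine ⟨∑ i ∈ T, dist j i, fun i hi => ?_⟩
  exact Finset.single_le_sum (f := fun i => dist j i) (fun i _ => dist_nonneg) hi

lemma set_nonempty (hy : ∀ i ∈ T, 0 < y i) {x : ℝ} (hx : x ≤ ∑ i ∈ T, y i) :
    {D : ℝ | x ≤ ∑ i ∈ T.filter (fun i => dist j i ≤ D), y i}.Nonempty := by
  obtain ⟨D, hD⟩ := exists_bound j T
  refine ⟨D, ?_⟩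
  have : T.filter (fun i => dist j i ≤ D) = T := Finset.filter_true_of_mem hD
  simp only [Set.mem_setOf_eq, this]
  exact hx

lemma set_bddBelow (hy : ∀ i ∈ T, 0 < y i) {x : ℝ} (hx : 0 < x) :
    BddBelow {D : ℝ | x ≤ ∑ i ∈ T.filter (fun i => dist j i ≤ D), y i} := by
  refine ⟨0, fun D hD => ?_⟩
  simp only [Set.mem_setOf_eq] at hD
  by_contra hneg
  push_neg at hneg
  have : T.filter (fun i => dist j i ≤ D) = ∅ := by
    apply Finset.filter_false_of_mem
    intro i _
    have := dist_nonneg (x := j) (y := i)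
    intro h; linarith
  rw [this] at hD
  simp at hD
  linarith

lemma qq_nonneg (hy : ∀ i ∈ T, 0 < y i) (x : ℝ) : 0 ≤ qq y j T x := by
  rcases le_or_gt x 0 with hx | hx
  · have huniv : {D : ℝ | x ≤ ∑ i ∈ T.filter (fun i => dist j i ≤ D), y i} = Set.univ := by
      ext D; simp only [Set.mem_setOf_eq, Set.mem_univ, iff_true]
      exact le_trans hx (V_nonneg hy D)
    rw [qq, huniv]
    have : ¬ BddBelow (Set.univ : Set ℝ) := by
      rintro ⟨b, hb⟩
      have := hb (Set.mem_univ (b - 1))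
      linarith
    rw [Real.sInf_of_not_bddBelow this]
  · apply Real.sInf_nonneg
    intro D hD
    simp only [Set.mem_setOf_eq] at hD
    by_contra hneg
    push_neg at hneg
    have : T.filter (fun i => dist j i ≤ D) = ∅ := by
      apply Finset.filter_false_of_mem
      intro i _
      have := dist_nonneg (x := j) (y := i)
      intro h; linarith
    rw [this] at hD
    simp at hD
    linarith

lemma qq_le (hy : ∀ i ∈ T, 0 < y i) {x D : ℝ} (hx0 : 0 < x)
    (hD : ∀ i ∈ T, dist j i ≤ D) (hx : x ≤ ∑ i ∈ T, y i) : qq y j T x ≤ D := by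
  apply csInf_le (set_bddBelow hy hx0)
  simp only [Set.mem_setOf_eq, Finset.filter_true_of_mem hD]
  exact hx

lemma qq_zero (hy : ∀ i ∈ T, 0 < y i) : qq y j T 0 = 0 := by
  have huniv : {D : ℝ | (0:ℝ) ≤ ∑ i ∈ T.filter (fun i => dist j i ≤ D), y i} = Set.univ := by
    ext D; simp only [Set.mem_setOf_eq, Set.mem_univ, iff_true]
    exact V_nonneg hy D
  rw [qq, huniv]
  have : ¬ BddBelow (Set.univ : Set ℝ) := by
    rintro ⟨b, hb⟩
    have := hb (Set.mem_univ (b - 1))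
    linarith
  rw [Real.sInf_of_not_bddBelow this]

lemma qq_monoOn (hy : ∀ i ∈ T, 0 < y i) :
    MonotoneOn (qq y j T) (Set.Icc 0 (∑ i ∈ T, y i)) := by
  intro a ha b hb hab
  rcases eq_or_lt_of_le ha.1 with h0 | h0
  · rw [← h0, qq_zero hy]
    exact qq_nonneg hy b
  · apply csInf_le_csInf (set_bddBelow hy h0) (set_nonempty hy hb.2)
    intro D hD
    simp only [Set.mem_setOf_eq] at hD ⊢
    linarith

lemma qq_attain (hy : ∀ i ∈ T, 0 < y i) {x : ℝ} (hx0 : 0 < x) (hx : x ≤ ∑ i ∈ T, y i) :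
    x ≤ ∑ i ∈ T.filter (fun i => dist j i ≤ qq y j T x), y i := by
  set c := qq y j T x with hc
  by_contra hlt
  push_neg at hlt
  -- there must be a facility with distance > c
  have hex : ∃ i ∈ T, c < dist j i := by
    by_contra hall
    push_neg at hall
    rw [Finset.filter_true_of_mem hall] at hlt
    linarith
  set G := (T.filter (fun i => c < dist j i)).image (fun i => dist j i - c) with hG
  have hGne : G.Nonempty := by
    obtain ⟨i, hi, hci⟩ := hex
    exact ⟨dist j i - c, Finset.mem_image.mpr ⟨i, Finset.mem_filter.mpr ⟨hi, hci⟩, rfl⟩⟩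
  set ε := G.min' hGne with he
  have hGpos : ∀ a ∈ G, 0 < a := by
    intro a ha
    obtain ⟨i, hi, hval⟩ := Finset.mem_image.mp ha
    have := (Finset.mem_filter.mp hi).2
    linarith [hval]
  have hεpos : 0 < ε := hGpos _ (G.min'_mem hGne)
  have key : ∀ D ∈ {D : ℝ | x ≤ ∑ i ∈ T.filter (fun i => dist j i ≤ D), y i}, c + ε ≤ D := by
    intro D hD
    by_contra hDlt
    push_neg at hDlt
    have hcD : c ≤ D := csInf_le (set_bddBelow hy hx0) hD
    have hfeq : T.filter (fun i => dist j i ≤ D) = T.filter (fun i => dist j i ≤ c) := by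
      apply Finset.filter_congr
      intro i hi
      constructor
      · intro hle
        by_contra hgt
        push_neg at hgt
        have hmem : dist j i - c ∈ G :=
          Finset.mem_image.mpr ⟨i, Finset.mem_filter.mpr ⟨hi, hgt⟩, rfl⟩
        have := G.min'_le _ hmem
        rw [← he] at this
        linarith
      · intro hle; linarith
    have hD2 : x ≤ ∑ i ∈ T.filter (fun i => dist j i ≤ D), y i := hD
    rw [hfeq] at hD2
    linarith
  have : c + ε ≤ c := le_csInf (set_nonempty hy hx) key
  linarith


lemma qq_top (hy : ∀ i ∈ T, 0 < y i) {i₀ : X} (hi₀ : i₀ ∈ T)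
    (hmax : ∀ i ∈ T, dist j i ≤ dist j i₀) {x : ℝ}
    (hw : ∑ i ∈ T.erase i₀, y i < x) (hx : x ≤ ∑ i ∈ T, y i) :
    qq y j T x = dist j i₀ := by
  have hset : {D : ℝ | x ≤ ∑ i ∈ T.filter (fun i => dist j i ≤ D), y i}
      = Set.Ici (dist j i₀) := by
    ext D
    simp only [Set.mem_setOf_eq, Set.mem_Ici]
    constructor
    · intro hD
      by_contra hlt
      push_neg at hlt
      have hsub : T.filter (fun i => dist j i ≤ D) ⊆ T.erase i₀ := by
        intro i hi
        rw [Finset.mem_filter] at hi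
        rw [Finset.mem_erase]
        refine ⟨?_, hi.1⟩
        rintro rfl
        linarith [hi.2]
      have := Finset.sum_le_sum_of_subset_of_nonneg hsub
        (fun i hi _ => (hy i (Finset.mem_erase.mp hi).2).le)
      linarith
    · intro hD
      have : T.filter (fun i => dist j i ≤ D) = T :=
        Finset.filter_true_of_mem (fun i hi => le_trans (hmax i hi) hD)
      rw [this]
      exact hx
  rw [qq, hset, csInf_Ici]

lemma qq_erase (hy : ∀ i ∈ T, 0 < y i) {i₀ : X} (hi₀ : i₀ ∈ T)
    (hmax : ∀ i ∈ T, dist j i ≤ dist j i₀) {x : ℝ}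
    (hx : x ≤ ∑ i ∈ T.erase i₀, y i) :
    qq y j T x = qq y j (T.erase i₀) x := by
  have hset : {D : ℝ | x ≤ ∑ i ∈ T.filter (fun i => dist j i ≤ D), y i}
      = {D : ℝ | x ≤ ∑ i ∈ (T.erase i₀).filter (fun i => dist j i ≤ D), y i} := by
    ext D
    simp only [Set.mem_setOf_eq]
    constructor
    · intro hD
      rcases le_or_gt (dist j i₀) D with hc | hc
      · have : (T.erase i₀).filter (fun i => dist j i ≤ D) = T.erase i₀ := by
          apply Finset.filter_true_of_mem
          intro i hi
          exact le_trans (hmax i (Finset.mem_erase.mp hi).2) hc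
        rw [this]; exact hx
      · have : T.filter (fun i => dist j i ≤ D) = (T.erase i₀).filter (fun i => dist j i ≤ D) := by
          ext i
          simp only [Finset.mem_filter, Finset.mem_erase]
          constructor
          · rintro ⟨hiT, hiD⟩
            refine ⟨⟨?_, hiT⟩, hiD⟩
            rintro rfl; linarith
          · rintro ⟨⟨_, hiT⟩, hiD⟩; exact ⟨hiT, hiD⟩
        rw [← this]; exact hD
    · intro hD
      refine le_trans hD (Finset.sum_le_sum_of_subset_of_nonneg ?_ ?_)
      · exact Finset.filter_subset_filter _ (Finset.erase_subset _ _)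
      · intro i hi _; exact (hy i (Finset.mem_filter.mp hi).1).le
  rw [qq, qq, hset]

lemma qq_intervalIntegrable (hy : ∀ i ∈ T, 0 < y i) {a b : ℝ} (ha : 0 ≤ a) (hab : a ≤ b)
    (hb : b ≤ ∑ i ∈ T, y i) : IntervalIntegrable (qq y j T) MeasureTheory.volume a b := by
  apply MonotoneOn.intervalIntegrable
  rw [Set.uIcc_of_le hab]
  exact (qq_monoOn hy).mono (Set.Icc_subset_Icc ha hb)

lemma sum_le_integral_qq : ∀ (T : Finset X), (∀ i ∈ T, 0 < y i) →
    ∑ i ∈ T, dist j i * y i ≤ ∫ x in (0:ℝ)..(∑ i ∈ T, y i), qq y j T x := by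
  intro T
  classical
  induction T using Finset.strongInduction with
  | _ T ih =>
    intro hy
    rcases T.eq_empty_or_nonempty with rfl | hne
    · simp
    · obtain ⟨i₀, hi₀, hmax⟩ := Finset.exists_max_image T (fun i => dist j i) hne
      set T' := T.erase i₀ with hT'
      have hy' : ∀ i ∈ T', 0 < y i := fun i hi => hy i (Finset.mem_erase.mp hi).2
      set w := ∑ i ∈ T', y i with hw
      set v := ∑ i ∈ T, y i with hv
      have hwv : w + y i₀ = v := Finset.sum_erase_add T y hi₀
      have hw0 : 0 ≤ w := Finset.sum_nonneg (fun i hi => (hy' i hi).le)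
      have hyi₀ : 0 < y i₀ := hy i₀ hi₀
      have hwlev : w ≤ v := by linarith
      have int1 : IntervalIntegrable (qq y j T) MeasureTheory.volume 0 w :=
        qq_intervalIntegrable hy le_rfl hw0 (by linarith)
      have int2 : IntervalIntegrable (qq y j T) MeasureTheory.volume w v :=
        qq_intervalIntegrable hy hw0 hwlev le_rfl
      have hsplit : (∫ x in (0:ℝ)..w, qq y j T x) + (∫ x in w..v, qq y j T x)
          = ∫ x in (0:ℝ)..v, qq y j T x :=
        intervalIntegral.integral_add_adjacent_intervals int1 int2
      have hleft : (∫ x in (0:ℝ)..w, qq y j T x) = ∫ x in (0:ℝ)..w, qq y j T' x := by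
        apply intervalIntegral.integral_congr_ae
        apply Filter.Eventually.of_forall
        intro x hx
        rw [Set.uIoc_of_le hw0] at hx
        exact qq_erase hy hi₀ hmax hx.2
      have hright : (∫ x in w..v, qq y j T x) = (v - w) * dist j i₀ := by
        have : (∫ x in w..v, qq y j T x) = ∫ x in w..v, dist j i₀ := by
          apply intervalIntegral.integral_congr_ae
          apply Filter.Eventually.of_forall
          intro x hx
          rw [Set.uIoc_of_le hwlev] at hx
          exact qq_top hy hi₀ hmax hx.1 hx.2
        rw [this, intervalIntegral.integral_const, smul_eq_mul]
      have hIH : ∑ i ∈ T', dist j i * y i ≤ ∫ x in (0:ℝ)..w, qq y j T' x :=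
        ih T' (Finset.erase_ssubset hi₀) hy'
      have hsum : ∑ i ∈ T', dist j i * y i + dist j i₀ * y i₀ = ∑ i ∈ T, dist j i * y i :=
        Finset.sum_erase_add T _ hi₀
      have hvw : v - w = y i₀ := by linarith
      calc ∑ i ∈ T, dist j i * y i = ∑ i ∈ T', dist j i * y i + dist j i₀ * y i₀ := hsum.symm
        _ ≤ (∫ x in (0:ℝ)..w, qq y j T' x) + dist j i₀ * y i₀ := by linarith
        _ = (∫ x in (0:ℝ)..w, qq y j T x) + (∫ x in w..v, qq y j T x) := by
            rw [hleft, hright, hvw]; ring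
        _ = ∫ x in (0:ℝ)..v, qq y j T x := hsplit

end LamAux


section Auxiliary

variable {X : Type*} [MetricSpace X] [DecidableEq X]

open LamAux

namespace FracSol

lemma q_eq_qq (s : FracSol X) (j : X) : s.q j = qq s.y j (s.Fj j) := rfl

lemma hy_Fj (s : FracSol X) {j : X} (hjC : j ∈ s.C) : ∀ i ∈ s.Fj j, 0 < s.y i :=
  fun i hi => s.y_pos i (s.Fj_sub j hjC hi)

lemma req_one_le (s : FracSol X) {j : X} (hjC : j ∈ s.C) : (1:ℝ) ≤ (s.req j : ℝ) := by
  exact_mod_cast s.req_pos j hjC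

/-- Concentration: a dangerous client has `y`-mass at least `r - 1/3` within
distance `dmax/15`. -/
lemma conc (s : FracSol X) {j : X} (hj : s.Dangerous j) :
    (s.req j : ℝ) - 1/3 ≤ ∑ i ∈ (s.Fj j).filter (fun i => dist j i ≤ s.dmax j / 15), s.y i := by
  obtain ⟨hjC, hdang⟩ := hj
  have hy := s.hy_Fj hjC
  have hr1 := s.req_one_le hjC
  set r : ℝ := (s.req j : ℝ) with hrdef
  have hvol : ∑ i ∈ s.Fj j, s.y i = r := s.Fj_vol j hjC
  -- the quantile at r - 1/3 is at most dmax/15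
  have hq13 : qq s.y j (s.Fj j) (r - 1/3) ≤ s.dmax j / 15 := by
    have hint1 : (0:ℝ) ≤ ∫ x in (r-1)..(r-1/3), qq s.y j (s.Fj j) x := by
      apply intervalIntegral.integral_nonneg (by linarith)
      intro u _
      exact qq_nonneg hy u
    have hint2 : (1/3) * qq s.y j (s.Fj j) (r - 1/3)
        ≤ ∫ x in (r-1/3)..r, qq s.y j (s.Fj j) x := by
      have hmono := qq_monoOn (j := j) hy
      rw [hvol] at hmono
      have hconst : ∫ x in (r-1/3)..r, qq s.y j (s.Fj j) (r - 1/3)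
          = (1/3) * qq s.y j (s.Fj j) (r - 1/3) := by
        rw [intervalIntegral.integral_const, smul_eq_mul]
        ring_nf
      rw [← hconst]
      apply intervalIntegral.integral_mono_on (by linarith)
      · exact intervalIntegrable_const
      · apply qq_intervalIntegrable hy (by linarith) (by linarith) (by rw [hvol])
      · intro x hx
        apply hmono (Set.mem_Icc.mpr ⟨by linarith, by linarith⟩)
          (Set.mem_Icc.mpr ⟨by linarith [hx.1], hx.2⟩) hx.1
    have hsplit : (∫ x in (r-1)..(r-1/3), qq s.y j (s.Fj j) x)
        + (∫ x in (r-1/3)..r, qq s.y j (s.Fj j) x)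
        = ∫ x in (r-1)..r, qq s.y j (s.Fj j) x := by
      apply intervalIntegral.integral_add_adjacent_intervals
      · apply qq_intervalIntegrable hy (by linarith) (by linarith) (by rw [hvol]; linarith)
      · apply qq_intervalIntegrable hy (by linarith) (by linarith) (by rw [hvol])
    have hdavT : s.davT j (s.req j) = ∫ x in (r-1)..r, qq s.y j (s.Fj j) x := by
      rw [davT, q_eq_qq]
    rw [hdavT] at hdang
    linarith
  have hattain := qq_attain (j := j) hy (x := r - 1/3) (by linarith) (by rw [hvol]; linarith)
  calc r - 1/3 ≤ ∑ i ∈ (s.Fj j).filter (fun i => dist j i ≤ qq s.y j (s.Fj j) (r - 1/3)), s.y i :=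
        hattain
    _ ≤ ∑ i ∈ (s.Fj j).filter (fun i => dist j i ≤ s.dmax j / 15), s.y i := V_mono hy hq13

/-- A facility strictly closer than `dmax j` belongs to `Fj j`. -/
lemma mem_Fj_of_close (s : FracSol X) {j : X} (hjC : j ∈ s.C) {i : X} (hiF : i ∈ s.F)
    (hlt : dist j i < s.dmax j) : i ∈ s.Fj j := by
  by_contra h
  have hmax : ∀ i'' ∈ s.Fj j, dist j i'' ≤ dist j i :=
    fun i'' h'' => s.Fj_closest j hjC i'' h'' i hiF h
  have hy := s.hy_Fj hjC
  have hr1 := s.req_one_le hjC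
  have : s.dmax j ≤ dist j i := by
    rw [dmax, q_eq_qq]
    exact qq_le hy (by linarith) hmax (by rw [s.Fj_vol j hjC])
  linarith

lemma dav_nonneg (s : FracSol X) {j : X} (hjC : j ∈ s.C) : 0 ≤ s.dav j := by
  have hy := s.hy_Fj hjC
  have hr1 := s.req_one_le hjC
  rw [dav, q_eq_qq]
  apply mul_nonneg (by positivity)
  apply intervalIntegral.integral_nonneg (by linarith)
  intro u _
  exact qq_nonneg hy u

lemma sum_le_r_dav (s : FracSol X) {j : X} (hjC : j ∈ s.C) {S : Finset X}
    (hS : S ⊆ s.Fj j) :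
    ∑ i ∈ S, dist j i * s.y i ≤ (s.req j : ℝ) * s.dav j := by
  have hy := s.hy_Fj hjC
  have hr1 := s.req_one_le hjC
  have hne : (s.req j : ℝ) ≠ 0 := by linarith
  have h1 : ∑ i ∈ S, dist j i * s.y i ≤ ∑ i ∈ s.Fj j, dist j i * s.y i := by
    apply Finset.sum_le_sum_of_subset_of_nonneg hS
    intro i hi _
    exact mul_nonneg dist_nonneg (hy i hi).le
  have h2 : ∑ i ∈ s.Fj j, dist j i * s.y i
      ≤ ∫ x in (0:ℝ)..(∑ i ∈ s.Fj j, s.y i), qq s.y j (s.Fj j) x :=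
    sum_le_integral_qq (s.Fj j) hy
  have h3 : (s.req j : ℝ) * s.dav j
      = ∫ x in (0:ℝ)..((s.req j : ℝ)), qq s.y j (s.Fj j) x := by
    rw [dav, q_eq_qq]
    field_simp
  rw [h3]
  rw [s.Fj_vol j hjC] at h2
  linarith

/-- Key geometric lemma: if the extended cluster of `j'` meets the core cluster
of `j`, then `dmax j'` is much smaller than `dmax j`. -/
lemma key (s : FracSol X) {j j' : X} (hj : s.Dangerous j) (hj' : s.Dangerous j')
    (hne : j ≠ j') (hnc : ¬ s.Conflict j j') (hle : s.dmax j' ≤ s.dmax j)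
    (hpos' : 0 < s.dmax j') {i₀ : X} (h1 : dist i₀ j' ≤ s.dmax j' / 10)
    (h2 : dist i₀ j ≤ s.dmax j / 15) : s.dmax j' ≤ s.dmax j / 6 := by
  by_contra hgt
  push_neg at hgt
  set M : ℝ := s.dmax j with hM
  set M' : ℝ := s.dmax j' with hM'
  have hjC := hj.1
  have hj'C := hj'.1
  have hyj := s.hy_Fj hjC
  have hyj' := s.hy_Fj hj'C
  have hr1 := s.req_one_le hjC
  have hr1' := s.req_one_le hj'C
  have hMpos : 0 < M := lt_of_lt_of_le hpos' hle
  have hd : dist j j' ≤ M/15 + M'/10 := by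
    calc dist j j' ≤ dist j i₀ + dist i₀ j' := dist_triangle j i₀ j'
      _ ≤ M/15 + M'/10 := by
          rw [dist_comm j i₀]
          exact add_le_add h2 h1
  set S : Finset X := (s.Fj j).filter (fun i => dist j i ≤ M/15) with hSdef
  set S' : Finset X := (s.Fj j').filter (fun i => dist j' i ≤ M'/15) with hS'def
  have hSvol : (s.req j : ℝ) - 1/3 ≤ ∑ i ∈ S, s.y i := s.conc hj
  have hS'vol : (s.req j' : ℝ) - 1/3 ≤ ∑ i ∈ S', s.y i := s.conc hj'
  have hSFj : S ⊆ s.Fj j := Finset.filter_subset _ _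
  have hS'Fj' : S' ⊆ s.Fj j' := Finset.filter_subset _ _
  -- S is contained in Fj j'
  have hSFj' : S ⊆ s.Fj j' := by
    intro i hi
    obtain ⟨hiFj, hidist⟩ := Finset.mem_filter.mp hi
    apply s.mem_Fj_of_close hj'C (s.Fj_sub j hjC hiFj)
    calc dist j' i ≤ dist j' j + dist j i := dist_triangle j' j i
      _ ≤ (M/15 + M'/10) + M/15 := by rw [dist_comm j' j]; exact add_le_add hd hidist
      _ < M' := by linarith
  -- S' is contained in Fj j
  have hS'Fj : S' ⊆ s.Fj j := by
    intro i hi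
    obtain ⟨hiFj', hidist⟩ := Finset.mem_filter.mp hi
    apply s.mem_Fj_of_close hjC (s.Fj_sub j' hj'C hiFj')
    calc dist j i ≤ dist j j' + dist j' i := dist_triangle j j' i
      _ ≤ (M/15 + M'/10) + M'/15 := add_le_add hd hidist
      _ < M := by linarith
  -- hence the requirements coincide
  have hreq_le : s.req j ≤ s.req j' := by
    have hvol' : ∑ i ∈ s.Fj j', s.y i = (s.req j' : ℝ) := s.Fj_vol j' hj'C
    have : ∑ i ∈ S, s.y i ≤ (s.req j' : ℝ) := by
      rw [← hvol']
      apply Finset.sum_le_sum_of_subset_of_nonneg hSFj'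
      intro i hi _
      exact (hyj' i hi).le
    have hlt : (s.req j : ℝ) < (s.req j' : ℝ) + 1 := by linarith
    exact_mod_cast Nat.lt_add_one_iff.mp (by exact_mod_cast hlt)
  have hreq_le' : s.req j' ≤ s.req j := by
    have hvol : ∑ i ∈ s.Fj j, s.y i = (s.req j : ℝ) := s.Fj_vol j hjC
    have : ∑ i ∈ S', s.y i ≤ (s.req j : ℝ) := by
      rw [← hvol]
      apply Finset.sum_le_sum_of_subset_of_nonneg hS'Fj
      intro i hi _
      exact (hyj i hi).le
    have hlt : (s.req j' : ℝ) < (s.req j : ℝ) + 1 := by linarith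
    exact_mod_cast Nat.lt_add_one_iff.mp (by exact_mod_cast hlt)
  have hreq : s.req j = s.req j' := le_antisymm hreq_le hreq_le'
  -- now derive a conflict
  set r : ℝ := (s.req j : ℝ) with hrdef
  set d : ℝ := dist j j' with hddef
  have hd0 : 0 ≤ d := dist_nonneg
  have hsum1 : ∑ i ∈ S, dist j i * s.y i ≤ r * s.dav j := s.sum_le_r_dav hjC hSFj
  have hsum2 : ∑ i ∈ S, dist j' i * s.y i ≤ (s.req j' : ℝ) * s.dav j' := s.sum_le_r_dav hj'C hSFj'
  have hsum2' : ∑ i ∈ S, dist j' i * s.y i ≤ r * s.dav j' := by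
    rw [hrdef, hreq]; exact hsum2
  have hlower : d * (∑ i ∈ S, s.y i) ≤ ∑ i ∈ S, dist j i * s.y i + ∑ i ∈ S, dist j' i * s.y i := by
    rw [Finset.mul_sum, ← Finset.sum_add_distrib]
    apply Finset.sum_le_sum
    intro i hi
    have hyi : 0 ≤ s.y i := (hyj i (hSFj hi)).le
    have htri : d ≤ dist j i + dist j' i := by
      rw [hddef]
      calc dist j j' ≤ dist j i + dist i j' := dist_triangle j i j'
        _ = dist j i + dist j' i := by rw [dist_comm i j']
    nlinarith
  have hdlow : d * (r - 1/3) ≤ r * s.dav j + r * s.dav j' := by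
    have : d * (r - 1/3) ≤ d * (∑ i ∈ S, s.y i) := by
      apply mul_le_mul_of_nonneg_left hSvol hd0
    linarith
  set m : ℝ := max (s.dav j) (s.dav j') with hmdef
  have hm1 : s.dav j ≤ m := le_max_left _ _
  have hm2 : s.dav j' ≤ m := le_max_right _ _
  have hm0 : 0 ≤ m := le_trans (s.dav_nonneg hjC) hm1
  have hrpos : 0 < r := by linarith
  have hd3m : d ≤ 3 * m := by
    nlinarith
  exact hnc ⟨hne, hreq, by rw [← hddef, ← hmdef]; linarith⟩

end FracSol

end Auxiliary


open FracSol in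
/-- Lemma 5 of the paper: for a set `D'` of pairwise non-conflicting dangerous clients,
there is a family `{B'_j}` with `B_j ⊆ B'_j ⊆ Ball(j, d_max(j)/10)` which is laminar. -/
theorem exists_laminar_family {X : Type*} [MetricSpace X] [DecidableEq X]
    (s : FracSol X) (D' : Finset X) (hD : ∀ j ∈ D', s.Dangerous j)
    (hpos : ∀ j ∈ D', 0 < s.dmax j)
    (hnc : ∀ j ∈ D', ∀ j' ∈ D', j ≠ j' → ¬ s.Conflict j j') :
    ∃ B' : X → Finset X,
      (∀ j ∈ D', s.Bset j ⊆ B' j ∧ B' j ⊆ s.ball j (s.dmax j / 10)) ∧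
      (∀ j ∈ D', ∀ j' ∈ D', j ≠ j' →
        B' j ⊆ B' j' ∨ B' j' ⊆ B' j ∨ B' j ∩ B' j' = ∅) := by
  classical
  revert hD hpos hnc
  induction D' using Finset.strongInduction with
  | _ D' ih =>
    intro hD hpos hnc
    rcases D'.eq_empty_or_nonempty with rfl | hne
    · exact ⟨fun _ => ∅, by simp, by simp⟩
    obtain ⟨j₀, hj₀D, hj₀max⟩ := Finset.exists_max_image D' s.dmax hne
    set D'' := D'.erase j₀ with hD''def
    have hss : D'' ⊂ D' := Finset.erase_ssubset hj₀D
    have hsub : D'' ⊆ D' := hss.subset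
    obtain ⟨B'', hB''sub, hB''lam⟩ := ih D'' hss
      (fun j hj => hD j (hsub hj)) (fun j hj => hpos j (hsub hj))
      (fun j hj j' hj' hne' => hnc j (hsub hj) j' (hsub hj') hne')
    set Merged : X → Prop := fun j' => (B'' j' ∩ s.Bset j₀).Nonempty with hMdef
    set U : Finset X := D''.biUnion (fun j' => if Merged j' then B'' j' else ∅) with hUdef
    set B' : X → Finset X := fun j => if j = j₀ then s.Bset j₀ ∪ U else B'' j with hB'def
    have hMj₀pos : 0 < s.dmax j₀ := hpos j₀ hj₀D
    have hB'eq : ∀ j' ∈ D'', B' j' = B'' j' := by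
      intro j' hj'
      have : j' ≠ j₀ := (Finset.mem_erase.mp hj').1
      simp only [hB'def, if_neg this]
    have hB'j₀ : B' j₀ = s.Bset j₀ ∪ U := by simp only [hB'def, if_pos rfl]
    -- merged clusters are contained in the /10 ball around j₀
    have hmerge_sub : ∀ j' ∈ D'', Merged j' → B'' j' ⊆ s.ball j₀ (s.dmax j₀ / 10) := by
      intro j' hj'D Hm
      obtain ⟨i₁, hi₁⟩ := Hm
      obtain ⟨hi₁B, hi₁Bset⟩ := Finset.mem_inter.mp hi₁
      have hi₁ball := (hB''sub j' hj'D).2 hi₁B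
      obtain ⟨hi₁F, hi₁d⟩ := Finset.mem_filter.mp hi₁ball
      obtain ⟨_, hi₁d0⟩ := Finset.mem_filter.mp hi₁Bset
      have hne' : j₀ ≠ j' := ((Finset.mem_erase.mp hj'D).1).symm
      have h6 : s.dmax j' ≤ s.dmax j₀ / 6 :=
        s.key (hD j₀ hj₀D) (hD j' (hsub hj'D)) hne'
          (hnc j₀ hj₀D j' (hsub hj'D) hne') (hj₀max j' (hsub hj'D))
          (hpos j' (hsub hj'D)) hi₁d hi₁d0
      intro i hi
      have hiball := (hB''sub j' hj'D).2 hi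
      obtain ⟨hiF, hid⟩ := Finset.mem_filter.mp hiball
      rw [FracSol.ball, Finset.mem_filter]
      refine ⟨hiF, ?_⟩
      calc dist i j₀ ≤ dist i j' + dist j' j₀ := dist_triangle i j' j₀
        _ ≤ s.dmax j' / 10 + (dist j' i₁ + dist i₁ j₀) :=
            add_le_add hid (dist_triangle j' i₁ j₀)
        _ ≤ s.dmax j' / 10 + (s.dmax j' / 10 + s.dmax j₀ / 15) := by
            rw [dist_comm j' i₁]
            exact add_le_add le_rfl (add_le_add hi₁d hi₁d0)
        _ ≤ s.dmax j₀ / 10 := by linarith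
    have hU_sub : U ⊆ s.ball j₀ (s.dmax j₀ / 10) := by
      intro i hi
      obtain ⟨j', hj'D, hij'⟩ := Finset.mem_biUnion.mp hi
      by_cases Hm : Merged j'
      · rw [if_pos Hm] at hij'
        exact hmerge_sub j' hj'D Hm hij'
      · rw [if_neg Hm] at hij'
        exact absurd hij' (Finset.notMem_empty i)
    have hBsub10 : s.Bset j₀ ⊆ s.ball j₀ (s.dmax j₀ / 10) := by
      intro i hi
      obtain ⟨hiF, hid⟩ := Finset.mem_filter.mp hi
      rw [FracSol.ball, Finset.mem_filter]
      exact ⟨hiF, by linarith⟩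
    have hB'j₀sub : B' j₀ ⊆ s.ball j₀ (s.dmax j₀ / 10) := by
      rw [hB'j₀]
      exact Finset.union_subset hBsub10 hU_sub
    -- a merged cluster is contained in B' j₀
    have hmerged_in : ∀ j' ∈ D'', Merged j' → B'' j' ⊆ B' j₀ := by
      intro j' hj'D Hm
      rw [hB'j₀]
      refine Finset.Subset.trans ?_ Finset.subset_union_right
      intro i hi
      apply Finset.mem_biUnion.mpr
      exact ⟨j', hj'D, by rw [if_pos Hm]; exact hi⟩
    -- laminarity of B' j₀ against an old cluster
    have hlam0 : ∀ j' ∈ D'', B' j₀ ⊆ B'' j' ∨ B'' j' ⊆ B' j₀ ∨ B' j₀ ∩ B'' j' = ∅ := by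
      intro j' hj'D
      by_cases Hm : Merged j'
      · exact Or.inr (Or.inl (hmerged_in j' hj'D Hm))
      · by_cases HP : ∃ j'' ∈ D'', Merged j'' ∧ B'' j' ⊆ B'' j''
        · obtain ⟨j'', hj''D, Hm'', hsub''⟩ := HP
          exact Or.inr (Or.inl (hsub''.trans (hmerged_in j'' hj''D Hm'')))
        · refine Or.inr (Or.inr (Finset.eq_empty_iff_forall_notMem.mpr ?_))
          intro i hi
          obtain ⟨hiB', hiB''⟩ := Finset.mem_inter.mp hi
          rw [hB'j₀] at hiB'
          rcases Finset.mem_union.mp hiB' with hiBset | hiU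
          · exact Hm ⟨i, Finset.mem_inter.mpr ⟨hiB'', hiBset⟩⟩
          · obtain ⟨j'', hj''D, hij''⟩ := Finset.mem_biUnion.mp hiU
            by_cases Hm'' : Merged j''
            · rw [if_pos Hm''] at hij''
              have hnej : j'' ≠ j' := by
                rintro rfl
                exact Hm Hm''
              rcases hB''lam j'' hj''D j' hj'D hnej with hc | hc | hc
              · obtain ⟨i₂, hi₂⟩ := Hm''
                obtain ⟨hi₂B, hi₂S⟩ := Finset.mem_inter.mp hi₂
                exact Hm ⟨i₂, Finset.mem_inter.mpr ⟨hc hi₂B, hi₂S⟩⟩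
              · exact HP ⟨j'', hj''D, Hm'', hc⟩
              · have : i ∈ B'' j'' ∩ B'' j' := Finset.mem_inter.mpr ⟨hij'', hiB''⟩
                rw [hc] at this
                exact Finset.notMem_empty i this
            · rw [if_neg Hm''] at hij''
              exact Finset.notMem_empty i hij''
    refine ⟨B', ?_, ?_⟩
    · intro j hj
      by_cases hjj₀ : j = j₀
      · subst hjj₀
        refine ⟨?_, hB'j₀sub⟩
        rw [hB'j₀]
        exact Finset.subset_union_left
      · have hjD'' : j ∈ D'' := Finset.mem_erase.mpr ⟨hjj₀, hj⟩
        rw [hB'eq j hjD'']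
        exact hB''sub j hjD''
    · intro j hj j' hj' hnejj'
      by_cases hjj₀ : j = j₀
      · subst hjj₀
        have hj'D'' : j' ∈ D'' := Finset.mem_erase.mpr ⟨fun h => hnejj' h.symm, hj'⟩
        rw [hB'eq j' hj'D'']
        exact hlam0 j' hj'D''
      · have hjD'' : j ∈ D'' := Finset.mem_erase.mpr ⟨hjj₀, hj⟩
        rw [hB'eq j hjD'']
        by_cases hj'j₀ : j' = j₀
        · subst hj'j₀
          rcases hlam0 j hjD'' with hc | hc | hc
          · exact Or.inr (Or.inl hc)
          · exact Or.inl hc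
          · refine Or.inr (Or.inr ?_)
            rw [Finset.inter_comm]
            exact hc
        · have hj'D'' : j' ∈ D'' := Finset.mem_erase.mpr ⟨hj'j₀, hj'⟩
          rw [hB'eq j' hj'D'']
          exact hB''lam j hjD'' j' hj'D'' hnejj'
end

section
/- Let F be a finite set, 𝒰 a family of pairwise disjoint subsets of F, ℒ a laminar family of subsets of F (any two members of ℒ are nested or disjoint), k a nonnegative integer, and for each L ∈ ℒ integers a_L ≤ b_L. Then the polytope P = {z ∈ [0,1]^F : ∑_{i∈U} z_i = 1 for all U ∈ 𝒰; a_L ≤ ∑_{i∈L} z_i ≤ b_L for all L ∈ ℒ; ∑_{i∈F} z_i = k} is integral: every point of P can be written as a convex combination of points of P with all coordinates in {0,1}. -/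
open scoped BigOperators

set_option linter.unusedSectionVars false

section LaminarAux

variable {α : Type*} [Fintype α] [DecidableEq α]

lemma sum_int_of_int {β : Type*} (s : Finset β) (f : β → ℝ)
    (h : ∀ i ∈ s, ∃ m : ℤ, f i = m) : ∃ m : ℤ, ∑ i ∈ s, f i = m := by
  classical
  induction s using Finset.cons_induction with
  | empty => exact ⟨0, by simp⟩
  | cons i s his ih =>
    obtain ⟨m, hm⟩ := ih (fun j hj => h j (Finset.mem_cons_of_mem hj))
    obtain ⟨m', hm'⟩ := h i (Finset.mem_cons_self i s)
    exact ⟨m' + m, by rw [Finset.sum_cons, hm, hm']; push_cast; ring⟩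

lemma exists_parts (S : Finset α) (x : α → ℝ) (hx : ∀ i ∈ S, 0 < x i ∧ x i < 1)
    (𝒜 : Finset (Finset α)) (hsub : ∀ A ∈ 𝒜, A ⊆ S)
    (hlam : ∀ A ∈ 𝒜, ∀ A' ∈ 𝒜, A ⊆ A' ∨ A' ⊆ A ∨ A ∩ A' = ∅)
    (hint : ∀ A ∈ 𝒜, ∃ m : ℤ, ∑ i ∈ A, x i = m) :
    ∃ P : Finset (Finset α),
      (∀ B ∈ P, B ⊆ S) ∧ (∀ B ∈ P, 2 ≤ B.card) ∧
      (∀ B ∈ P, ∀ B' ∈ P, B ≠ B' → B ∩ B' = ∅) ∧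
      (∀ A ∈ 𝒜, ∀ d : α → ℝ, (∀ B ∈ P, ∑ i ∈ B, d i = 0) → ∑ i ∈ A, d i = 0) := by
  classical
  set core : Finset α → Finset α :=
    fun A => A \ (𝒜.filter (fun A' => A' ⊂ A)).biUnion id with hcore
  have hcore_sub : ∀ A, core A ⊆ A := fun A => Finset.sdiff_subset
  -- disjointness of cores
  have hdisj_core : ∀ A ∈ 𝒜, ∀ A' ∈ 𝒜, A ≠ A' → Disjoint (core A) (core A') := by
    intro A hA A' hA' hne
    rcases hlam A hA A' hA' with h | h | h
    · have hss : A ⊂ A' := Finset.ssubset_iff_subset_ne.2 ⟨h, hne⟩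
      rw [Finset.disjoint_left]
      intro i hi hi'
      have : i ∈ (𝒜.filter (fun A'' => A'' ⊂ A')).biUnion id := by
        refine Finset.mem_biUnion.2 ⟨A, Finset.mem_filter.2 ⟨hA, hss⟩, hcore_sub A hi⟩
      exact (Finset.mem_sdiff.1 hi').2 this
    · have hss : A' ⊂ A := Finset.ssubset_iff_subset_ne.2 ⟨h, hne.symm⟩
      rw [Finset.disjoint_left]
      intro i hi hi'
      have : i ∈ (𝒜.filter (fun A'' => A'' ⊂ A)).biUnion id := by
        refine Finset.mem_biUnion.2 ⟨A', Finset.mem_filter.2 ⟨hA', hss⟩, hcore_sub A' hi'⟩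
      exact (Finset.mem_sdiff.1 hi).2 this
    · rw [Finset.disjoint_left]
      intro i hi hi'
      have : i ∈ A ∩ A' := Finset.mem_inter.2 ⟨hcore_sub A hi, hcore_sub A' hi'⟩
      simp [h] at this
  have hPD : ∀ t : Finset (Finset α), t ⊆ 𝒜 →
      Set.PairwiseDisjoint (↑t : Set (Finset α)) core := by
    intro t ht B hB B' hB' hne
    exact hdisj_core B (ht hB) B' (ht hB') hne
  -- partition property
  have hpart : ∀ A ∈ 𝒜, A = (𝒜.filter (· ⊆ A)).biUnion core := by
    intro A hA
    apply Finset.Subset.antisymm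
    · intro i hi
      have hne : (𝒜.filter (fun A' => i ∈ A' ∧ A' ⊆ A)).Nonempty :=
        ⟨A, Finset.mem_filter.2 ⟨hA, hi, Finset.Subset.refl A⟩⟩
      obtain ⟨M, hM, hMmin⟩ := Finset.exists_min_image _ Finset.card hne
      obtain ⟨hM𝒜, hiM, hMA⟩ := Finset.mem_filter.1 hM
      refine Finset.mem_biUnion.2 ⟨M, Finset.mem_filter.2 ⟨hM𝒜, hMA⟩, ?_⟩
      refine Finset.mem_sdiff.2 ⟨hiM, ?_⟩
      intro hcon
      obtain ⟨A'', hA'', hiA''⟩ := Finset.mem_biUnion.1 hcon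
      obtain ⟨hA''𝒜, hA''M⟩ := Finset.mem_filter.1 hA''
      have : A''.card < M.card := Finset.card_lt_card hA''M
      have : M.card ≤ A''.card := hMmin A''
        (Finset.mem_filter.2 ⟨hA''𝒜, hiA'', hA''M.subset.trans hMA⟩)
      omega
    · intro i hi
      obtain ⟨B, hB, hiB⟩ := Finset.mem_biUnion.1 hi
      exact (Finset.mem_filter.1 hB).2 (hcore_sub B hiB)
  have hfilter_split : ∀ A ∈ 𝒜, 𝒜.filter (· ⊆ A) = insert A (𝒜.filter (· ⊂ A)) := by
    intro A hA
    ext B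
    simp only [Finset.mem_filter, Finset.mem_insert]
    constructor
    · rintro ⟨hB, hBA⟩
      rcases eq_or_ssubset_of_subset hBA with h | h
      · exact Or.inl h
      · exact Or.inr ⟨hB, h⟩
    · rintro (rfl | ⟨hB, hBA⟩)
      · exact ⟨hA, Finset.Subset.refl _⟩
      · exact ⟨hB, hBA.subset⟩
  have hAnotss : ∀ A : Finset α, A ∉ 𝒜.filter (· ⊂ A) := by
    intro A h
    exact (Finset.mem_filter.1 h).2.false
  -- sum splitting for any function
  have hsplit : ∀ A ∈ 𝒜, ∀ f : α → ℝ,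
      ∑ i ∈ A, f i = ∑ i ∈ core A, f i + ∑ B ∈ 𝒜.filter (· ⊂ A), ∑ i ∈ core B, f i := by
    intro A hA f
    conv_lhs => rw [hpart A hA]
    rw [Finset.sum_biUnion (hPD _ (Finset.filter_subset _ _)),
      hfilter_split A hA, Finset.sum_insert (hAnotss A)]
  -- integer sums on cores
  have hcoreint : ∀ n : ℕ, ∀ A ∈ 𝒜, A.card ≤ n → ∃ m : ℤ, ∑ i ∈ core A, x i = m := by
    intro n
    induction n with
    | zero =>
      intro A hA hcard
      have : A = ∅ := Finset.card_eq_zero.1 (Nat.le_zero.1 hcard)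
      refine ⟨0, ?_⟩
      have : core A = ∅ := Finset.subset_empty.1 (this ▸ hcore_sub A)
      simp [this]
    | succ n ih =>
      intro A hA hcard
      obtain ⟨mA, hmA⟩ := hint A hA
      obtain ⟨mR, hmR⟩ := sum_int_of_int (𝒜.filter (· ⊂ A)) (fun B => ∑ i ∈ core B, x i)
        (by
          intro B hB
          obtain ⟨hB𝒜, hBA⟩ := Finset.mem_filter.1 hB
          exact ih B hB𝒜 (by have := Finset.card_lt_card hBA; omega))
      refine ⟨mA - mR, ?_⟩
      have := hsplit A hA x
      rw [hmA, hmR] at this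
      push_cast
      linarith
  -- the parts
  refine ⟨(𝒜.image core).filter (fun B => B.Nonempty), ?_, ?_, ?_, ?_⟩
  · intro B hB
    obtain ⟨A, hA, rfl⟩ := Finset.mem_image.1 (Finset.mem_filter.1 hB).1
    exact (hcore_sub A).trans (hsub A hA)
  · intro B hB
    obtain ⟨hBim, hBne⟩ := Finset.mem_filter.1 hB
    obtain ⟨A, hA, rfl⟩ := Finset.mem_image.1 hBim
    obtain ⟨m, hm⟩ := hcoreint A.card A hA le_rfl
    have hpos : 0 < ∑ i ∈ core A, x i :=
      Finset.sum_pos (fun i hi => (hx i ((hcore_sub A).trans (hsub A hA) hi)).1) hBne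
    have hlt : ∑ i ∈ core A, x i < (core A).card := by
      calc ∑ i ∈ core A, x i < ∑ i ∈ core A, 1 :=
            Finset.sum_lt_sum_of_nonempty hBne
              (fun i hi => (hx i ((hcore_sub A).trans (hsub A hA) hi)).2)
        _ = (core A).card := by simp
    rw [hm] at hpos hlt
    have h1 : 1 ≤ m := by exact_mod_cast hpos
    have h2 : (m : ℝ) < ((core A).card : ℕ) := hlt
    have h2' : m < ((core A).card : ℤ) := by exact_mod_cast h2
    omega
  · intro B hB B' hB' hne
    obtain ⟨A, hA, rfl⟩ := Finset.mem_image.1 (Finset.mem_filter.1 hB).1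
    obtain ⟨A', hA', rfl⟩ := Finset.mem_image.1 (Finset.mem_filter.1 hB').1
    have hAA' : A ≠ A' := by rintro rfl; exact hne rfl
    exact Finset.disjoint_iff_inter_eq_empty.1 (hdisj_core A hA A' hA' hAA')
  · intro A hA d hd
    rw [hsplit A hA d]
    have hz : ∀ B ∈ 𝒜, ∑ i ∈ core B, d i = 0 := by
      intro B hB
      rcases Finset.eq_empty_or_nonempty (core B) with h | h
      · simp [h]
      · exact hd _ (Finset.mem_filter.2 ⟨Finset.mem_image.2 ⟨B, hB, rfl⟩, h⟩)
    rw [hz A hA, Finset.sum_eq_zero (fun B hB => hz B (Finset.mem_filter.1 hB).1)]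
    simp


lemma exists_kernel_vec (S : Finset α) (hS : S.Nonempty)
    (P₁ P₂ : Finset (Finset α))
    (hsub₁ : ∀ B ∈ P₁, B ⊆ S) (hsub₂ : ∀ B ∈ P₂, B ⊆ S)
    (hcard₁ : ∀ B ∈ P₁, 2 ≤ B.card) (hcard₂ : ∀ B ∈ P₂, 2 ≤ B.card)
    (hdisj₁ : ∀ B ∈ P₁, ∀ B' ∈ P₁, B ≠ B' → B ∩ B' = ∅)
    (hdisj₂ : ∀ B ∈ P₂, ∀ B' ∈ P₂, B ≠ B' → B ∩ B' = ∅) :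
    ∃ d : α → ℝ, d ≠ 0 ∧ (∀ i, i ∉ S → d i = 0) ∧
      (∀ B ∈ P₁ ∪ P₂, ∑ i ∈ B, d i = 0) := by
  classical
  set χ : Finset α → EuclideanSpace ℝ {y // y ∈ S} :=
    fun A => WithLp.toLp 2 (fun i => if (i : α) ∈ A then (1:ℝ) else 0) with hχ
  have hχ_inj : ∀ A ⊆ S, ∀ B ⊆ S, χ A = χ B → A = B := by
    intro A hA B hB h
    ext j
    constructor
    · intro hj
      have := congrArg (fun v => v ⟨j, hA hj⟩) h
      simp only [hχ, PiLp.toLp_apply, if_pos hj] at this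
      by_contra hjB
      rw [if_neg hjB] at this
      norm_num at this
    · intro hj
      have := congrArg (fun v => v ⟨j, hB hj⟩) h
      simp only [hχ, PiLp.toLp_apply, if_pos hj] at this
      by_contra hjA
      rw [if_neg hjA] at this
      norm_num at this
  -- counting facts
  have hcount : ∀ P : Finset (Finset α), (∀ B ∈ P, B ⊆ S) → (∀ B ∈ P, 2 ≤ B.card) →
      (∀ B ∈ P, ∀ B' ∈ P, B ≠ B' → B ∩ B' = ∅) →
      2 * P.card ≤ (P.biUnion (fun B => B)).card ∧ (P.biUnion (fun B => B)) ⊆ S := by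
    intro P hsub hcard hdisj
    constructor
    · rw [Finset.card_biUnion (fun B hB B' hB' hne =>
        Finset.disjoint_iff_inter_eq_empty.2 (hdisj B hB B' hB' hne))]
      calc 2 * P.card = ∑ _B ∈ P, 2 := by simp [mul_comm]
        _ ≤ ∑ B ∈ P, B.card := Finset.sum_le_sum (fun B hB => hcard B hB)
    · intro i hi
      obtain ⟨B, hB, hiB⟩ := Finset.mem_biUnion.1 hi
      exact hsub B hB hiB
  have h1 := hcount P₁ hsub₁ hcard₁ hdisj₁
  have h2 := hcount P₂ hsub₂ hcard₂ hdisj₂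
  have hb1 : 2 * P₁.card ≤ S.card :=
    h1.1.trans (Finset.card_le_card h1.2)
  have hb2 : 2 * P₂.card ≤ S.card :=
    h2.1.trans (Finset.card_le_card h2.2)
  -- the span of the characteristic vectors has low rank
  have hScard : 1 ≤ S.card := Finset.card_pos.2 hS
  have hkey : ∀ P : Finset (Finset α), (∀ B ∈ P, B ⊆ S) →
      (∀ B ∈ P, ∀ B' ∈ P, B ≠ B' → B ∩ B' = ∅) →
      P.biUnion (fun B => B) = S → ∑ A ∈ P, χ A = χ S := by
    intro P hsub hdisj hcover
    ext i
    rw [WithLp.ofLp_sum, Finset.sum_apply]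
    have hiS : (i : α) ∈ P.biUnion (fun B => B) := by rw [hcover]; exact i.2
    obtain ⟨A₀, hA₀, hiA₀⟩ := Finset.mem_biUnion.1 hiS
    have : ∀ A ∈ P, A ≠ A₀ → χ A i = 0 := by
      intro A hA hne
      simp only [hχ, PiLp.toLp_apply]
      rw [if_neg]
      intro hiA
      have : (i:α) ∈ A ∩ A₀ := Finset.mem_inter.2 ⟨hiA, hiA₀⟩
      rw [hdisj A hA A₀ hA₀ hne] at this
      exact absurd this (Finset.notMem_empty _)
    rw [Finset.sum_eq_single_of_mem A₀ hA₀ this]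
    simp [hχ, hiA₀, i.2]
  have hrank : Module.finrank ℝ (Submodule.span ℝ (↑((P₁ ∪ P₂).image χ) : Set (EuclideanSpace ℝ {y // y ∈ S}))) < S.card := by
    by_cases hlt : P₁.card + P₂.card < S.card
    · calc Module.finrank ℝ (Submodule.span ℝ (↑((P₁ ∪ P₂).image χ) : Set (EuclideanSpace ℝ {y // y ∈ S})))
          ≤ ((P₁ ∪ P₂).image χ).card := finrank_span_finset_le_card _
        _ ≤ (P₁ ∪ P₂).card := Finset.card_image_le
        _ ≤ P₁.card + P₂.card := Finset.card_union_le _ _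
        _ < S.card := hlt
    · push_neg at hlt
      have he1 : 2 * P₁.card = S.card := by omega
      have he2 : 2 * P₂.card = S.card := by omega
      have hcov : ∀ P : Finset (Finset α), (∀ B ∈ P, B ⊆ S) →
          2 * P.card ≤ (P.biUnion (fun B => B)).card →
          (P.biUnion (fun B => B)) ⊆ S → 2 * P.card = S.card →
          P.biUnion (fun B => B) = S := by
        intro P hsub hcb hsubS hPe
        apply Finset.eq_of_subset_of_card_le hsubS
        omega
      have hcov1 := hcov P₁ hsub₁ h1.1 h1.2 he1
      have hcov2 := hcov P₂ hsub₂ h2.1 h2.2 he2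
      have hid1 := hkey P₁ hsub₁ hdisj₁ hcov1
      have hid2 := hkey P₂ hsub₂ hdisj₂ hcov2
      by_cases hPP : P₁ ⊆ P₂
      · have hun : P₁ ∪ P₂ = P₂ := Finset.union_eq_right.2 hPP
        calc Module.finrank ℝ (Submodule.span ℝ (↑((P₁ ∪ P₂).image χ) : Set (EuclideanSpace ℝ {y // y ∈ S})))
            ≤ ((P₁ ∪ P₂).image χ).card := finrank_span_finset_le_card _
          _ ≤ (P₁ ∪ P₂).card := Finset.card_image_le
          _ = P₂.card := by rw [hun]
          _ < S.card := by omega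
      · obtain ⟨A₀, hA₀1, hA₀2⟩ := Finset.not_subset.1 hPP
        have hA₀S : A₀ ⊆ S := hsub₁ A₀ hA₀1
        have hA₀mem : χ A₀ ∈ (P₁ ∪ P₂).image χ :=
          Finset.mem_image_of_mem χ (Finset.mem_union_left _ hA₀1)
        have hspan : Submodule.span ℝ (↑((P₁ ∪ P₂).image χ) : Set (EuclideanSpace ℝ {y // y ∈ S}))
            = Submodule.span ℝ (↑(((P₁ ∪ P₂).image χ).erase (χ A₀)) : Set (EuclideanSpace ℝ {y // y ∈ S})) := by
          apply le_antisymm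
          · rw [Submodule.span_le]
            intro v hv
            obtain ⟨A, hA, rfl⟩ := Finset.mem_image.1 (by exact_mod_cast hv)
            by_cases hvA : χ A = χ A₀
            · rw [hvA]
              have hmem2 : ∀ B ∈ P₂, χ B ∈ Submodule.span ℝ
                  (↑(((P₁ ∪ P₂).image χ).erase (χ A₀)) : Set (EuclideanSpace ℝ {y // y ∈ S})) := by
                intro B hB
                apply Submodule.subset_span
                have hne : χ B ≠ χ A₀ := by
                  intro h
                  exact hA₀2 (hχ_inj B (hsub₂ B hB) A₀ hA₀S h ▸ hB)
                exact_mod_cast Finset.mem_erase.2 ⟨hne,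
                  Finset.mem_image_of_mem χ (Finset.mem_union_right _ hB)⟩
              have hmem1 : ∀ A' ∈ P₁.erase A₀, χ A' ∈ Submodule.span ℝ
                  (↑(((P₁ ∪ P₂).image χ).erase (χ A₀)) : Set (EuclideanSpace ℝ {y // y ∈ S})) := by
                intro A' hA'
                apply Submodule.subset_span
                obtain ⟨hne, hA'1⟩ := Finset.mem_erase.1 hA'
                have hne' : χ A' ≠ χ A₀ := by
                  intro h
                  exact hne (hχ_inj A' (hsub₁ A' hA'1) A₀ hA₀S h)
                exact_mod_cast Finset.mem_erase.2 ⟨hne',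
                  Finset.mem_image_of_mem χ (Finset.mem_union_left _ hA'1)⟩
              have hid : χ A₀ = (∑ B ∈ P₂, χ B) - ∑ A' ∈ P₁.erase A₀, χ A' := by
                rw [hid2, ← hid1, ← Finset.add_sum_erase P₁ χ hA₀1]
                abel
              have hin := Submodule.sub_mem _ (Submodule.sum_mem _ hmem2)
                (Submodule.sum_mem _ (fun A' hA' => hmem1 A' hA'))
              rwa [← hid] at hin
            · apply Submodule.subset_span
              exact_mod_cast Finset.mem_erase.2 ⟨hvA,
                Finset.mem_image_of_mem χ hA⟩
          · exact Submodule.span_mono (by exact_mod_cast Finset.erase_subset _ _)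
        rw [hspan]
        have hc1 : (((P₁ ∪ P₂).image χ).erase (χ A₀)).card = ((P₁ ∪ P₂).image χ).card - 1 :=
          Finset.card_erase_of_mem hA₀mem
        have hc2 : ((P₁ ∪ P₂).image χ).card ≤ P₁.card + P₂.card :=
          Finset.card_image_le.trans (Finset.card_union_le _ _)
        have hc3 : 1 ≤ ((P₁ ∪ P₂).image χ).card :=
          Finset.card_pos.2 ⟨χ A₀, hA₀mem⟩
        calc Module.finrank ℝ (Submodule.span ℝ (↑(((P₁ ∪ P₂).image χ).erase (χ A₀)) : Set (EuclideanSpace ℝ {y // y ∈ S})))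
            ≤ (((P₁ ∪ P₂).image χ).erase (χ A₀)).card := finrank_span_finset_le_card _
          _ < S.card := by omega
  -- extract orthogonal vector
  have hfr : Module.finrank ℝ (EuclideanSpace ℝ {y // y ∈ S}) = S.card := by
    rw [finrank_euclideanSpace, Fintype.card_coe]
  have hnetop : Submodule.span ℝ (↑((P₁ ∪ P₂).image χ) : Set (EuclideanSpace ℝ {y // y ∈ S})) ≠ ⊤ := by
    intro h
    rw [h, finrank_top, hfr] at hrank
    exact lt_irrefl _ hrank
  have hbot : (Submodule.span ℝ (↑((P₁ ∪ P₂).image χ) : Set (EuclideanSpace ℝ {y // y ∈ S})))ᗮ ≠ ⊥ := by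
    intro h
    exact hnetop (Submodule.orthogonal_eq_bot_iff.1 h)
  obtain ⟨d', hd'mem, hd'ne⟩ := Submodule.exists_mem_ne_zero_of_ne_bot hbot
  set d : α → ℝ := fun j => if h : j ∈ S then d' ⟨j, h⟩ else 0 with hd
  have hsum : ∀ B ∈ P₁ ∪ P₂, ∑ i ∈ B, d i = 0 := by
    intro B hB
    have hBS : B ⊆ S := by
      rcases Finset.mem_union.1 hB with h | h
      · exact hsub₁ B h
      · exact hsub₂ B h
    have hmem : χ B ∈ Submodule.span ℝ (↑((P₁ ∪ P₂).image χ) : Set (EuclideanSpace ℝ {y // y ∈ S})) :=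
      Submodule.subset_span (by exact_mod_cast Finset.mem_image_of_mem χ hB)
    have hip : (inner ℝ (χ B) d' : ℝ) = 0 :=
      (Submodule.mem_orthogonal _ _).1 hd'mem (χ B) hmem
    rw [PiLp.inner_apply] at hip
    have : ∑ i : {y // y ∈ S}, (if (i:α) ∈ B then (1:ℝ) else 0) * d' i = 0 := by
      simpa [hχ] using hip
    calc ∑ i ∈ B, d i = ∑ i ∈ S, (if i ∈ B then d i else 0) := by
          rw [Finset.sum_ite_mem, Finset.inter_eq_right.2 hBS]
      _ = ∑ i ∈ S.attach, (if (i:α) ∈ B then d (i:α) else 0) :=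
          (Finset.sum_attach S (fun i => if i ∈ B then d i else 0)).symm
      _ = ∑ i : {y // y ∈ S}, (if (i:α) ∈ B then (1:ℝ) else 0) * d' i := by
          apply Finset.sum_congr rfl
          intro i _
          by_cases h : (i : α) ∈ B
          · simp [h, hd, i.2]
          · simp [h]
      _ = 0 := this
  refine ⟨d, ?_, fun i hi => by simp [hd, hi], hsum⟩
  intro h
  apply hd'ne
  ext i
  have := congrFun h (i : α)
  simpa [hd, i.2] using this

lemma exists_direction (S : Finset α) (hS : S.Nonempty) (x : α → ℝ)
    (hx : ∀ i ∈ S, 0 < x i ∧ x i < 1)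
    (𝒯₁ 𝒯₂ : Finset (Finset α))
    (hlam1 : ∀ T ∈ 𝒯₁, ∀ T' ∈ 𝒯₁, T ⊆ T' ∨ T' ⊆ T ∨ T ∩ T' = ∅)
    (hlam2 : ∀ T ∈ 𝒯₂, ∀ T' ∈ 𝒯₂, T ⊆ T' ∨ T' ⊆ T ∨ T ∩ T' = ∅)
    (hint1 : ∀ T ∈ 𝒯₁, ∃ m : ℤ, ∑ i ∈ T ∩ S, x i = m)
    (hint2 : ∀ T ∈ 𝒯₂, ∃ m : ℤ, ∑ i ∈ T ∩ S, x i = m) :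
    ∃ d : α → ℝ, d ≠ 0 ∧ (∀ i, i ∉ S → d i = 0) ∧
      (∀ T ∈ 𝒯₁, ∑ i ∈ T, d i = 0) ∧ (∀ T ∈ 𝒯₂, ∑ i ∈ T, d i = 0) := by
  classical
  have htrace : ∀ (𝒯 : Finset (Finset α)),
      (∀ T ∈ 𝒯, ∀ T' ∈ 𝒯, T ⊆ T' ∨ T' ⊆ T ∨ T ∩ T' = ∅) →
      (∀ A ∈ 𝒯.image (· ∩ S), A ⊆ S) ∧
      (∀ A ∈ 𝒯.image (· ∩ S), ∀ A' ∈ 𝒯.image (· ∩ S),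
        A ⊆ A' ∨ A' ⊆ A ∨ A ∩ A' = ∅) := by
    intro 𝒯 hl
    refine ⟨?_, ?_⟩
    · intro A hA
      obtain ⟨T, hT, rfl⟩ := Finset.mem_image.1 hA
      exact Finset.inter_subset_right
    · intro A hA A' hA'
      obtain ⟨T, hT, rfl⟩ := Finset.mem_image.1 hA
      obtain ⟨T', hT', rfl⟩ := Finset.mem_image.1 hA'
      rcases hl T hT T' hT' with h | h | h
      · exact Or.inl (Finset.inter_subset_inter h (Finset.Subset.refl S))
      · exact Or.inr (Or.inl (Finset.inter_subset_inter h (Finset.Subset.refl S)))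
      · refine Or.inr (Or.inr ?_)
        apply Finset.eq_empty_of_forall_notMem
        intro i hi
        simp only [Finset.mem_inter] at hi
        have : i ∈ T ∩ T' := Finset.mem_inter.2 ⟨hi.1.1, hi.2.1⟩
        rw [h] at this
        exact Finset.notMem_empty _ this
  have hintim : ∀ (𝒯 : Finset (Finset α)),
      (∀ T ∈ 𝒯, ∃ m : ℤ, ∑ i ∈ T ∩ S, x i = m) →
      (∀ A ∈ 𝒯.image (· ∩ S), ∃ m : ℤ, ∑ i ∈ A, x i = m) := by
    intro 𝒯 h A hA
    obtain ⟨T, hT, rfl⟩ := Finset.mem_image.1 hA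
    exact h T hT
  obtain ⟨P₁, hs₁, hc₁, hd₁, hp₁⟩ := exists_parts S x hx (𝒯₁.image (· ∩ S))
    (htrace 𝒯₁ hlam1).1 (htrace 𝒯₁ hlam1).2 (hintim 𝒯₁ hint1)
  obtain ⟨P₂, hs₂, hc₂, hd₂, hp₂⟩ := exists_parts S x hx (𝒯₂.image (· ∩ S))
    (htrace 𝒯₂ hlam2).1 (htrace 𝒯₂ hlam2).2 (hintim 𝒯₂ hint2)
  obtain ⟨d, hd0, hdsupp, hdsum⟩ := exists_kernel_vec S hS P₁ P₂ hs₁ hs₂ hc₁ hc₂ hd₁ hd₂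
  have key : ∀ (𝒯 : Finset (Finset α)) (P : Finset (Finset α)),
      (∀ A ∈ 𝒯.image (· ∩ S), ∀ d : α → ℝ,
        (∀ B ∈ P, ∑ i ∈ B, d i = 0) → ∑ i ∈ A, d i = 0) →
      (∀ B ∈ P, ∑ i ∈ B, d i = 0) →
      ∀ T ∈ 𝒯, ∑ i ∈ T, d i = 0 := by
    intro 𝒯 P hp hz T hT
    have h1 : ∑ i ∈ T ∩ S, d i = ∑ i ∈ T, d i := by
      apply Finset.sum_subset Finset.inter_subset_left
      intro i hiT hiTS
      exact hdsupp i (fun hiS => hiTS (Finset.mem_inter.2 ⟨hiT, hiS⟩))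
    rw [← h1]
    exact hp (T ∩ S) (Finset.mem_image_of_mem _ hT) d hz
  refine ⟨d, hd0, hdsupp, ?_, ?_⟩
  · exact key 𝒯₁ P₁ hp₁ (fun B hB => hdsum B (Finset.mem_union_left _ hB))
  · exact key 𝒯₂ P₂ hp₂ (fun B hB => hdsum B (Finset.mem_union_right _ hB))


/-- number of non-tight constraints -/
noncomputable def ntc (ℒ : Finset (Finset α)) (a b : Finset α → ℤ) (z : α → ℝ) : ℕ :=
  (Finset.univ.filter fun i : α => z i ≠ 0 ∧ z i ≠ 1).card +
  (ℒ.filter fun L => ∑ i ∈ L, z i ≠ (a L : ℝ)).card +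
  (ℒ.filter fun L => ∑ i ∈ L, z i ≠ (b L : ℝ)).card

lemma step_lemma (𝒰 ℒ : Finset (Finset α)) (k : ℕ) (a b : Finset α → ℤ) (z d : α → ℝ)
    (hbox : ∀ i : α, 0 ≤ z i ∧ z i ≤ 1)
    (hbundle : ∀ U ∈ 𝒰, ∑ i ∈ U, z i = 1)
    (hlambound : ∀ L ∈ ℒ, (a L : ℝ) ≤ ∑ i ∈ L, z i ∧ ∑ i ∈ L, z i ≤ (b L : ℝ))
    (htotal : ∑ i : α, z i = (k : ℝ))
    (hd0 : d ≠ 0)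
    (hdS : ∀ i, (z i = 0 ∨ z i = 1) → d i = 0)
    (hdU : ∀ U ∈ 𝒰, ∑ i ∈ U, d i = 0)
    (hdL : ∀ L ∈ ℒ, (∑ i ∈ L, z i = (a L : ℝ) ∨ ∑ i ∈ L, z i = (b L : ℝ)) → ∑ i ∈ L, d i = 0)
    (hdtot : ∑ i : α, d i = 0) :
    ∃ ε : ℝ, 0 < ε ∧
      (∀ i : α, 0 ≤ z i + ε * d i ∧ z i + ε * d i ≤ 1) ∧
      (∀ U ∈ 𝒰, ∑ i ∈ U, (z i + ε * d i) = 1) ∧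
      (∀ L ∈ ℒ, (a L : ℝ) ≤ ∑ i ∈ L, (z i + ε * d i) ∧ ∑ i ∈ L, (z i + ε * d i) ≤ (b L : ℝ)) ∧
      (∑ i : α, (z i + ε * d i) = (k : ℝ)) ∧
      ntc ℒ a b (fun i => z i + ε * d i) < ntc ℒ a b z := by
  classical
  have hfrac : ∀ i, d i ≠ 0 → 0 < z i ∧ z i < 1 := by
    intro i hdi
    rcases hbox i with ⟨h0, h1⟩
    constructor
    · rcases lt_or_eq_of_le h0 with h | h
      · exact h
      · exact absurd (hdS i (Or.inl h.symm)) hdi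
    · rcases lt_or_eq_of_le h1 with h | h
      · exact h
      · exact absurd (hdS i (Or.inr h)) hdi
  have hslack : ∀ L ∈ ℒ, ∑ i ∈ L, d i ≠ 0 →
      (a L : ℝ) < ∑ i ∈ L, z i ∧ ∑ i ∈ L, z i < (b L : ℝ) := by
    intro L hL hdL'
    rcases hlambound L hL with ⟨h0, h1⟩
    constructor
    · rcases lt_or_eq_of_le h0 with h | h
      · exact h
      · exact absurd (hdL L hL (Or.inl h.symm)) hdL'
    · rcases lt_or_eq_of_le h1 with h | h
      · exact h
      · exact absurd (hdL L hL (Or.inr h)) hdL'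
  have hmove : ∀ (ε : ℝ) (t : Finset α),
      ∑ i ∈ t, (z i + ε * d i) = ∑ i ∈ t, z i + ε * ∑ i ∈ t, d i := by
    intro ε t
    rw [Finset.sum_add_distrib, Finset.mul_sum]
  -- the ratio sets
  set R1 : Finset ℝ := (Finset.univ.filter fun i : α => d i ≠ 0).image
    (fun i => if 0 < d i then (1 - z i) / d i else (0 - z i) / d i) with hR1
  set R2 : Finset ℝ := (ℒ.filter fun L => 0 < ∑ i ∈ L, d i).image
    (fun L => ((b L : ℝ) - ∑ i ∈ L, z i) / (∑ i ∈ L, d i)) with hR2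
  set R3 : Finset ℝ := (ℒ.filter fun L => ∑ i ∈ L, d i < 0).image
    (fun L => ((a L : ℝ) - ∑ i ∈ L, z i) / (∑ i ∈ L, d i)) with hR3
  obtain ⟨i₀, hi₀⟩ := Function.ne_iff.1 hd0
  have hi₀' : d i₀ ≠ 0 := hi₀
  have hR1ne : R1.Nonempty :=
    ⟨_, Finset.mem_image_of_mem _ (Finset.mem_filter.2 ⟨Finset.mem_univ i₀, hi₀'⟩)⟩
  have hRne : (R1 ∪ R2 ∪ R3).Nonempty :=
    hR1ne.mono (Finset.subset_union_left.trans Finset.subset_union_left)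
  set ε := (R1 ∪ R2 ∪ R3).min' hRne with hε
  have hεmem : ε ∈ R1 ∪ R2 ∪ R3 := (R1 ∪ R2 ∪ R3).min'_mem hRne
  have hεle : ∀ r ∈ R1 ∪ R2 ∪ R3, ε ≤ r := fun r hr => (R1 ∪ R2 ∪ R3).min'_le r hr
  have hεpos : 0 < ε := by
    have : ∀ r ∈ R1 ∪ R2 ∪ R3, 0 < r := by
      intro r hr
      rcases Finset.mem_union.1 hr with hr | hr
      · rcases Finset.mem_union.1 hr with hr | hr
        · obtain ⟨i, hi, rfl⟩ := Finset.mem_image.1 hr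
          have hdi : d i ≠ 0 := (Finset.mem_filter.1 hi).2
          obtain ⟨h0, h1⟩ := hfrac i hdi
          by_cases hpos : 0 < d i
          · rw [if_pos hpos]
            exact div_pos (by linarith) hpos
          · rw [if_neg hpos]
            have hneg : d i < 0 := lt_of_le_of_ne (not_lt.1 hpos) hdi
            exact div_pos_iff.2 (Or.inr ⟨by linarith, hneg⟩)
        · obtain ⟨L, hL, rfl⟩ := Finset.mem_image.1 hr
          obtain ⟨hLℒ, hLd⟩ := Finset.mem_filter.1 hL
          have := hslack L hLℒ (ne_of_gt hLd)
          exact div_pos (by linarith [this.2]) hLd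
      · obtain ⟨L, hL, rfl⟩ := Finset.mem_image.1 hr
        obtain ⟨hLℒ, hLd⟩ := Finset.mem_filter.1 hL
        have := hslack L hLℒ (ne_of_lt hLd)
        exact div_pos_iff.2 (Or.inr ⟨by linarith [this.1], hLd⟩)
    exact this ε hεmem
  -- membership properties at the new point
  have hbox' : ∀ i : α, 0 ≤ z i + ε * d i ∧ z i + ε * d i ≤ 1 := by
    intro i
    by_cases hdi : d i = 0
    · rw [hdi] ; rcases hbox i with ⟨h0, h1⟩ ; constructor <;> linarith
    · have hmem : (if 0 < d i then (1 - z i) / d i else (0 - z i) / d i) ∈ R1 ∪ R2 ∪ R3 :=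
        Finset.mem_union_left _ (Finset.mem_union_left _
          (Finset.mem_image_of_mem _ (Finset.mem_filter.2 ⟨Finset.mem_univ i, hdi⟩)))
      obtain ⟨h0, h1⟩ := hfrac i hdi
      by_cases hpos : 0 < d i
      · rw [if_pos hpos] at hmem
        have := hεle _ hmem
        have h2 : ε * d i ≤ 1 - z i := by
          rw [← div_mul_cancel₀ (1 - z i) (ne_of_gt hpos)]
          exact mul_le_mul_of_nonneg_right this (le_of_lt hpos)
        constructor
        · nlinarith
        · linarith
      · have hneg : d i < 0 := lt_of_le_of_ne (not_lt.1 hpos) hdi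
        rw [if_neg hpos] at hmem
        have := hεle _ hmem
        have h2 : 0 - z i ≤ ε * d i := by
          rw [← div_mul_cancel₀ (0 - z i) (ne_of_lt hneg)]
          exact mul_le_mul_of_nonpos_right this (le_of_lt hneg)
        constructor
        · linarith
        · nlinarith
  have hlam' : ∀ L ∈ ℒ, (a L : ℝ) ≤ ∑ i ∈ L, (z i + ε * d i) ∧
      ∑ i ∈ L, (z i + ε * d i) ≤ (b L : ℝ) := by
    intro L hL
    rw [hmove]
    rcases lt_trichotomy (∑ i ∈ L, d i) 0 with hneg | hzero | hpos
    · have hmem : ((a L : ℝ) - ∑ i ∈ L, z i) / (∑ i ∈ L, d i) ∈ R1 ∪ R2 ∪ R3 :=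
        Finset.mem_union_right _
          (Finset.mem_image_of_mem _ (Finset.mem_filter.2 ⟨hL, hneg⟩))
      have := hεle _ hmem
      have h2 : (a L : ℝ) - ∑ i ∈ L, z i ≤ ε * ∑ i ∈ L, d i := by
        rw [← div_mul_cancel₀ ((a L : ℝ) - ∑ i ∈ L, z i) (ne_of_lt hneg)]
        exact mul_le_mul_of_nonpos_right this (le_of_lt hneg)
      obtain ⟨hb1, hb2⟩ := hlambound L hL
      constructor
      · linarith
      · nlinarith
    · rw [hzero]
      obtain ⟨hb1, hb2⟩ := hlambound L hL
      constructor <;> linarith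
    · have hmem : ((b L : ℝ) - ∑ i ∈ L, z i) / (∑ i ∈ L, d i) ∈ R1 ∪ R2 ∪ R3 :=
        Finset.mem_union_left _ (Finset.mem_union_right _
          (Finset.mem_image_of_mem _ (Finset.mem_filter.2 ⟨hL, hpos⟩)))
      have := hεle _ hmem
      have h2 : ε * ∑ i ∈ L, d i ≤ (b L : ℝ) - ∑ i ∈ L, z i := by
        rw [← div_mul_cancel₀ ((b L : ℝ) - ∑ i ∈ L, z i) (ne_of_gt hpos)]
        exact mul_le_mul_of_nonneg_right this (le_of_lt hpos)
      obtain ⟨hb1, hb2⟩ := hlambound L hL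
      constructor
      · nlinarith
      · linarith
  refine ⟨ε, hεpos, hbox', ?_, hlam', ?_, ?_⟩
  · intro U hU
    rw [hmove, hbundle U hU, hdU U hU] ; ring
  · rw [hmove, htotal, hdtot] ; ring
  -- strict decrease of ntc
  · set z' : α → ℝ := fun i => z i + ε * d i with hz'
    have hsub_box : (Finset.univ.filter fun i : α => z' i ≠ 0 ∧ z' i ≠ 1) ⊆
        (Finset.univ.filter fun i : α => z i ≠ 0 ∧ z i ≠ 1) := by
      intro i hi
      obtain ⟨_, h⟩ := Finset.mem_filter.1 hi
      refine Finset.mem_filter.2 ⟨Finset.mem_univ i, ?_⟩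
      by_contra hcon
      rw [not_and_or, not_not, not_not] at hcon
      have hdi : d i = 0 := hdS i hcon
      have : z' i = z i := by simp [hz', hdi]
      rw [this] at h
      tauto
    have hsub_a : (ℒ.filter fun L => ∑ i ∈ L, z' i ≠ (a L : ℝ)) ⊆
        (ℒ.filter fun L => ∑ i ∈ L, z i ≠ (a L : ℝ)) := by
      intro L hL
      obtain ⟨hLℒ, h⟩ := Finset.mem_filter.1 hL
      refine Finset.mem_filter.2 ⟨hLℒ, ?_⟩
      intro hcon
      have hdL' : ∑ i ∈ L, d i = 0 := hdL L hLℒ (Or.inl hcon)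
      rw [hmove ε L, hcon, hdL'] at h
      simp at h
    have hsub_b : (ℒ.filter fun L => ∑ i ∈ L, z' i ≠ (b L : ℝ)) ⊆
        (ℒ.filter fun L => ∑ i ∈ L, z i ≠ (b L : ℝ)) := by
      intro L hL
      obtain ⟨hLℒ, h⟩ := Finset.mem_filter.1 hL
      refine Finset.mem_filter.2 ⟨hLℒ, ?_⟩
      intro hcon
      have hdL' : ∑ i ∈ L, d i = 0 := hdL L hLℒ (Or.inr hcon)
      rw [hmove ε L, hcon, hdL'] at h
      simp at h
    have hcard_box := Finset.card_le_card hsub_box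
    have hcard_a := Finset.card_le_card hsub_a
    have hcard_b := Finset.card_le_card hsub_b
    have hstrict : (Finset.univ.filter fun i : α => z' i ≠ 0 ∧ z' i ≠ 1).card <
        (Finset.univ.filter fun i : α => z i ≠ 0 ∧ z i ≠ 1).card ∨
        (ℒ.filter fun L => ∑ i ∈ L, z' i ≠ (a L : ℝ)).card <
        (ℒ.filter fun L => ∑ i ∈ L, z i ≠ (a L : ℝ)).card ∨
        (ℒ.filter fun L => ∑ i ∈ L, z' i ≠ (b L : ℝ)).card <
        (ℒ.filter fun L => ∑ i ∈ L, z i ≠ (b L : ℝ)).card := by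
      rcases Finset.mem_union.1 hεmem with hm | hm
      · rcases Finset.mem_union.1 hm with hm | hm
        · -- a box constraint becomes tight
          left
          obtain ⟨i, hi, hieq⟩ := Finset.mem_image.1 hm
          have hdi : d i ≠ 0 := (Finset.mem_filter.1 hi).2
          obtain ⟨h0, h1⟩ := hfrac i hdi
          have hi_old : i ∈ Finset.univ.filter fun i : α => z i ≠ 0 ∧ z i ≠ 1 :=
            Finset.mem_filter.2 ⟨Finset.mem_univ i, ne_of_gt h0, ne_of_lt h1⟩
          have hi_new : i ∉ Finset.univ.filter fun i : α => z' i ≠ 0 ∧ z' i ≠ 1 := by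
            intro hcon
            obtain ⟨_, hc1, hc2⟩ := Finset.mem_filter.1 hcon
            by_cases hpos : 0 < d i
            · rw [if_pos hpos] at hieq
              apply hc2
              show z i + ε * d i = 1
              rw [← hieq, div_mul_cancel₀ _ (ne_of_gt hpos)] ; ring
            · have hneg : d i < 0 := lt_of_le_of_ne (not_lt.1 hpos) hdi
              rw [if_neg hpos] at hieq
              apply hc1
              show z i + ε * d i = 0
              rw [← hieq, div_mul_cancel₀ _ (ne_of_lt hneg)] ; ring
          exact Finset.card_lt_card ((Finset.ssubset_iff_of_subset hsub_box).2
            ⟨i, hi_old, hi_new⟩)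
        · -- an upper laminar constraint becomes tight
          right; right
          obtain ⟨L, hL, hieq⟩ := Finset.mem_image.1 hm
          obtain ⟨hLℒ, hLd⟩ := Finset.mem_filter.1 hL
          have hsl := hslack L hLℒ (ne_of_gt hLd)
          have hL_old : L ∈ ℒ.filter fun L => ∑ i ∈ L, z i ≠ (b L : ℝ) :=
            Finset.mem_filter.2 ⟨hLℒ, ne_of_lt hsl.2⟩
          have hL_new : L ∉ ℒ.filter fun L => ∑ i ∈ L, z' i ≠ (b L : ℝ) := by
            intro hcon
            apply (Finset.mem_filter.1 hcon).2
            show ∑ i ∈ L, (z i + ε * d i) = (b L : ℝ)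
            rw [hmove, ← hieq, div_mul_cancel₀ _ (ne_of_gt hLd)] ; ring
          exact Finset.card_lt_card ((Finset.ssubset_iff_of_subset hsub_b).2
            ⟨L, hL_old, hL_new⟩)
      · -- a lower laminar constraint becomes tight
        right; left
        obtain ⟨L, hL, hieq⟩ := Finset.mem_image.1 hm
        obtain ⟨hLℒ, hLd⟩ := Finset.mem_filter.1 hL
        have hsl := hslack L hLℒ (ne_of_lt hLd)
        have hL_old : L ∈ ℒ.filter fun L => ∑ i ∈ L, z i ≠ (a L : ℝ) :=
          Finset.mem_filter.2 ⟨hLℒ, (ne_of_lt hsl.1).symm⟩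
        have hL_new : L ∉ ℒ.filter fun L => ∑ i ∈ L, z' i ≠ (a L : ℝ) := by
          intro hcon
          apply (Finset.mem_filter.1 hcon).2
          show ∑ i ∈ L, (z i + ε * d i) = (a L : ℝ)
          rw [hmove, ← hieq, div_mul_cancel₀ _ (ne_of_lt hLd)] ; ring
        exact Finset.card_lt_card ((Finset.ssubset_iff_of_subset hsub_a).2
          ⟨L, hL_old, hL_new⟩)
    unfold ntc
    omega


lemma integral_case (𝒰 ℒ : Finset (Finset α)) (k : ℕ) (a b : Finset α → ℤ) (z : α → ℝ)
    (h01 : ∀ i : α, z i = 0 ∨ z i = 1)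
    (hbundle : ∀ U ∈ 𝒰, ∑ i ∈ U, z i = 1)
    (hlambound : ∀ L ∈ ℒ, (a L : ℝ) ≤ ∑ i ∈ L, z i ∧ ∑ i ∈ L, z i ≤ (b L : ℝ))
    (htotal : ∑ i : α, z i = (k : ℝ)) :
    ∃ (m : ℕ) (w : Fin m → ℝ) (v : Fin m → α → ℝ),
      (∀ p : Fin m, 0 ≤ w p) ∧ (∑ p : Fin m, w p = 1) ∧
      (∀ p : Fin m,
        (∀ i : α, v p i = 0 ∨ v p i = 1) ∧
        (∀ U ∈ 𝒰, ∑ i ∈ U, v p i = 1) ∧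
        (∀ L ∈ ℒ, (a L : ℝ) ≤ ∑ i ∈ L, v p i ∧ ∑ i ∈ L, v p i ≤ (b L : ℝ)) ∧
        (∑ i : α, v p i = (k : ℝ))) ∧
      (∀ i : α, z i = ∑ p : Fin m, w p * v p i) :=
  ⟨1, fun _ => 1, fun _ => z, fun _ => zero_le_one, by simp,
    fun _ => ⟨h01, hbundle, hlambound, htotal⟩, fun i => by simp⟩

lemma main_aux (𝒰 : Finset (Finset α))
    (hdisj : ∀ U ∈ 𝒰, ∀ U' ∈ 𝒰, U ≠ U' → U ∩ U' = ∅)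
    (ℒ : Finset (Finset α))
    (hlam : ∀ L ∈ ℒ, ∀ L' ∈ ℒ, L ⊆ L' ∨ L' ⊆ L ∨ L ∩ L' = ∅)
    (k : ℕ) (a b : Finset α → ℤ) :
    ∀ n : ℕ, ∀ z : α → ℝ,
    (∀ i : α, 0 ≤ z i ∧ z i ≤ 1) →
    (∀ U ∈ 𝒰, ∑ i ∈ U, z i = 1) →
    (∀ L ∈ ℒ, (a L : ℝ) ≤ ∑ i ∈ L, z i ∧ ∑ i ∈ L, z i ≤ (b L : ℝ)) →
    (∑ i : α, z i = (k : ℝ)) →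
    ntc ℒ a b z ≤ n →
    ∃ (m : ℕ) (w : Fin m → ℝ) (v : Fin m → α → ℝ),
      (∀ p : Fin m, 0 ≤ w p) ∧ (∑ p : Fin m, w p = 1) ∧
      (∀ p : Fin m,
        (∀ i : α, v p i = 0 ∨ v p i = 1) ∧
        (∀ U ∈ 𝒰, ∑ i ∈ U, v p i = 1) ∧
        (∀ L ∈ ℒ, (a L : ℝ) ≤ ∑ i ∈ L, v p i ∧ ∑ i ∈ L, v p i ≤ (b L : ℝ)) ∧
        (∑ i : α, v p i = (k : ℝ))) ∧
      (∀ i : α, z i = ∑ p : Fin m, w p * v p i) := by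
  classical
  intro n
  induction n with
  | zero =>
    intro z hbox hbundle hlambound htotal hn
    have h01 : ∀ i : α, z i = 0 ∨ z i = 1 := by
      intro i
      by_contra hcon
      rw [not_or] at hcon
      have hpos : 0 < (Finset.univ.filter fun i : α => z i ≠ 0 ∧ z i ≠ 1).card :=
        Finset.card_pos.2 ⟨i, Finset.mem_filter.2 ⟨Finset.mem_univ i, hcon⟩⟩
      unfold ntc at hn
      omega
    exact integral_case 𝒰 ℒ k a b z h01 hbundle hlambound htotal
  | succ n ih =>
    intro z hbox hbundle hlambound htotal hn
    by_cases h01 : ∀ i : α, z i = 0 ∨ z i = 1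
    · exact integral_case 𝒰 ℒ k a b z h01 hbundle hlambound htotal
    · push_neg at h01
      obtain ⟨i₀, hi₀0, hi₀1⟩ := h01
      set S : Finset α := Finset.univ.filter (fun i : α => z i ≠ 0 ∧ z i ≠ 1) with hSdef
      have hS : S.Nonempty := ⟨i₀, Finset.mem_filter.2 ⟨Finset.mem_univ i₀, hi₀0, hi₀1⟩⟩
      have hnotS : ∀ i, i ∉ S → z i = 0 ∨ z i = 1 := by
        intro i hi
        by_contra hcon
        rw [not_or] at hcon
        exact hi (Finset.mem_filter.2 ⟨Finset.mem_univ i, hcon⟩)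
      have hx : ∀ i ∈ S, 0 < z i ∧ z i < 1 := by
        intro i hi
        obtain ⟨_, h0, h1⟩ := Finset.mem_filter.1 hi
        rcases hbox i with ⟨hb0, hb1⟩
        exact ⟨lt_of_le_of_ne hb0 (Ne.symm h0), lt_of_le_of_ne hb1 h1⟩
      have htr : ∀ T : Finset α, (∃ c : ℤ, ∑ i ∈ T, z i = c) →
          ∃ m : ℤ, ∑ i ∈ T ∩ S, z i = m := by
        rintro T ⟨c, hc⟩
        have hsd : ∑ i ∈ T \ (T ∩ S), z i + ∑ i ∈ T ∩ S, z i = ∑ i ∈ T, z i :=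
          Finset.sum_sdiff Finset.inter_subset_left
        obtain ⟨m2, hm2⟩ := sum_int_of_int (T \ (T ∩ S)) z (by
          intro i hi
          obtain ⟨hiT, hiTS⟩ := Finset.mem_sdiff.1 hi
          rcases hnotS i (fun hiS => hiTS (Finset.mem_inter.2 ⟨hiT, hiS⟩)) with h | h
          · exact ⟨0, by rw [h]; simp⟩
          · exact ⟨1, by rw [h]; simp⟩)
        refine ⟨c - m2, ?_⟩
        push_cast
        linarith
      set 𝒯₁ : Finset (Finset α) := insert Finset.univ
        (ℒ.filter fun L => ∑ i ∈ L, z i = (a L : ℝ) ∨ ∑ i ∈ L, z i = (b L : ℝ)) with h𝒯₁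
      have hlam1 : ∀ T ∈ 𝒯₁, ∀ T' ∈ 𝒯₁, T ⊆ T' ∨ T' ⊆ T ∨ T ∩ T' = ∅ := by
        intro T hT T' hT'
        rcases Finset.mem_insert.1 hT with rfl | hT
        · exact Or.inr (Or.inl (Finset.subset_univ T'))
        · rcases Finset.mem_insert.1 hT' with rfl | hT'
          · exact Or.inl (Finset.subset_univ T)
          · exact hlam T (Finset.mem_filter.1 hT).1 T' (Finset.mem_filter.1 hT').1
      have hlam2 : ∀ T ∈ 𝒰, ∀ T' ∈ 𝒰, T ⊆ T' ∨ T' ⊆ T ∨ T ∩ T' = ∅ := by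
        intro T hT T' hT'
        by_cases h : T = T'
        · exact Or.inl (h ▸ Finset.Subset.refl T)
        · exact Or.inr (Or.inr (hdisj T hT T' hT' h))
      have hint1 : ∀ T ∈ 𝒯₁, ∃ m : ℤ, ∑ i ∈ T ∩ S, z i = m := by
        intro T hT
        rcases Finset.mem_insert.1 hT with rfl | hT
        · exact htr _ ⟨(k : ℤ), by rw [htotal]; push_cast; ring⟩
        · rcases (Finset.mem_filter.1 hT).2 with h | h
          · exact htr _ ⟨a T, h⟩
          · exact htr _ ⟨b T, h⟩
      have hint2 : ∀ T ∈ 𝒰, ∃ m : ℤ, ∑ i ∈ T ∩ S, z i = m := by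
        intro T hT
        exact htr _ ⟨1, by rw [hbundle T hT]; simp⟩
      obtain ⟨d, hd0, hdsupp, hd𝒯₁, hd𝒯₂⟩ :=
        exists_direction S hS z hx 𝒯₁ 𝒰 hlam1 hlam2 hint1 hint2
      have hdS : ∀ i, (z i = 0 ∨ z i = 1) → d i = 0 := by
        intro i h
        apply hdsupp
        intro hiS
        obtain ⟨_, h0, h1⟩ := Finset.mem_filter.1 hiS
        tauto
      have hdL : ∀ L ∈ ℒ, (∑ i ∈ L, z i = (a L : ℝ) ∨ ∑ i ∈ L, z i = (b L : ℝ)) →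
          ∑ i ∈ L, d i = 0 := by
        intro L hL ht
        exact hd𝒯₁ L (Finset.mem_insert_of_mem (Finset.mem_filter.2 ⟨hL, ht⟩))
      have hdtot : ∑ i : α, d i = 0 := hd𝒯₁ Finset.univ (Finset.mem_insert_self _ _)
      -- step in direction d
      obtain ⟨ε₁, hε₁, hbox₁, hbun₁, hlamb₁, htot₁, hntc₁⟩ :=
        step_lemma 𝒰 ℒ k a b z d hbox hbundle hlambound htotal hd0 hdS hd𝒯₂ hdL hdtot
      -- step in direction -d
      have hd0' : (fun i => -d i) ≠ 0 := by
        intro h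
        apply hd0
        funext i
        have := congrFun h i
        simp only [Pi.zero_apply] at this ⊢
        linarith
      have hneg : ∀ t : Finset α, ∑ i ∈ t, (-d i) = -∑ i ∈ t, d i := by
        intro t; rw [← Finset.sum_neg_distrib]
      obtain ⟨ε₂, hε₂, hbox₂, hbun₂, hlamb₂, htot₂, hntc₂⟩ :=
        step_lemma 𝒰 ℒ k a b z (fun i => -d i) hbox hbundle hlambound htotal hd0'
          (fun i h => by show -d i = 0; rw [hdS i h]; ring)
          (fun U hU => by rw [hneg, hd𝒯₂ U hU]; ring)
          (fun L hL ht => by rw [hneg, hdL L hL ht]; ring)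
          (by rw [hneg, hdtot]; ring)
      set z₁ : α → ℝ := fun i => z i + ε₁ * d i with hz₁def
      set z₂ : α → ℝ := fun i => z i + ε₂ * (-d i) with hz₂def
      obtain ⟨m₁, w₁, v₁, hw₁, hw₁s, hv₁, hzd₁⟩ :=
        ih z₁ hbox₁ hbun₁ hlamb₁ htot₁ (by omega)
      obtain ⟨m₂, w₂, v₂, hw₂, hw₂s, hv₂, hzd₂⟩ :=
        ih z₂ hbox₂ hbun₂ hlamb₂ htot₂ (by omega)
      have hsum12 : 0 < ε₁ + ε₂ := by linarith
      set lam : ℝ := ε₂ / (ε₁ + ε₂) with hlamdef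
      set mu : ℝ := ε₁ / (ε₁ + ε₂) with hmudef
      have hlampos : 0 ≤ lam := le_of_lt (div_pos hε₂ hsum12)
      have hmupos : 0 ≤ mu := le_of_lt (div_pos hε₁ hsum12)
      have hlammu : lam + mu = 1 := by
        rw [hlamdef, hmudef, ← add_div, add_comm]
        exact div_self (ne_of_gt hsum12)
      have hkey : lam * ε₁ - mu * ε₂ = 0 := by
        rw [hlamdef, hmudef]
        field_simp
        ring
      have hzdecomp : ∀ i, z i = lam * z₁ i + mu * z₂ i := by
        intro i
        have : lam * z₁ i + mu * z₂ i
            = (lam + mu) * z i + (lam * ε₁ - mu * ε₂) * d i := by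
          rw [hz₁def, hz₂def]; ring
        rw [this, hlammu, hkey]; ring
      refine ⟨m₁ + m₂, Fin.append (fun p => lam * w₁ p) (fun p => mu * w₂ p),
        Fin.append v₁ v₂, ?_, ?_, ?_, ?_⟩
      · intro p
        refine Fin.addCases ?_ ?_ p <;> intro q
        · rw [Fin.append_left]; exact mul_nonneg hlampos (hw₁ q)
        · rw [Fin.append_right]; exact mul_nonneg hmupos (hw₂ q)
      · rw [Fin.sum_univ_add]
        simp only [Fin.append_left, Fin.append_right]
        rw [← Finset.mul_sum, ← Finset.mul_sum, hw₁s, hw₂s, mul_one, mul_one]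
        exact hlammu
      · intro p
        refine Fin.addCases ?_ ?_ p <;> intro q
        · simp only [Fin.append_left]; exact hv₁ q
        · simp only [Fin.append_right]; exact hv₂ q
      · intro i
        rw [Fin.sum_univ_add]
        simp only [Fin.append_left, Fin.append_right, mul_assoc]
        rw [← Finset.mul_sum, ← Finset.mul_sum, ← hzd₁ i, ← hzd₂ i]
        exact hzdecomp i

end LaminarAux

/-- The polytope defined by a family `𝒰` of pairwise disjoint sets (with `∑_{i∈U} z_i = 1`),
a laminar family `ℒ` with integral lower/upper bounds `a_L ≤ ∑_{i∈L} z_i ≤ b_L`,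
box constraints `z ∈ [0,1]^F`, and the cardinality constraint `∑_i z_i = k`, is integral:
every point of the polytope is a convex combination of its 0/1 points. -/
theorem laminar_polytope_integral {α : Type*} [Fintype α] [DecidableEq α]
    (𝒰 : Finset (Finset α))
    (hdisj : ∀ U ∈ 𝒰, ∀ U' ∈ 𝒰, U ≠ U' → U ∩ U' = ∅)
    (ℒ : Finset (Finset α))
    (hlam : ∀ L ∈ ℒ, ∀ L' ∈ ℒ, L ⊆ L' ∨ L' ⊆ L ∨ L ∩ L' = ∅)
    (k : ℕ) (a b : Finset α → ℤ) (hab : ∀ L ∈ ℒ, a L ≤ b L)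
    (z : α → ℝ)
    (hbox : ∀ i : α, 0 ≤ z i ∧ z i ≤ 1)
    (hbundle : ∀ U ∈ 𝒰, ∑ i ∈ U, z i = 1)
    (hlambound : ∀ L ∈ ℒ, (a L : ℝ) ≤ ∑ i ∈ L, z i ∧ ∑ i ∈ L, z i ≤ (b L : ℝ))
    (htotal : ∑ i : α, z i = (k : ℝ)) :
    ∃ (m : ℕ) (w : Fin m → ℝ) (v : Fin m → α → ℝ),
      (∀ p : Fin m, 0 ≤ w p) ∧ (∑ p : Fin m, w p = 1) ∧
      (∀ p : Fin m,
        (∀ i : α, v p i = 0 ∨ v p i = 1) ∧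
        (∀ U ∈ 𝒰, ∑ i ∈ U, v p i = 1) ∧
        (∀ L ∈ ℒ, (a L : ℝ) ≤ ∑ i ∈ L, v p i ∧ ∑ i ∈ L, v p i ≤ (b L : ℝ)) ∧
        (∑ i : α, v p i = (k : ℝ))) ∧
      (∀ i : α, z i = ∑ p : Fin m, w p * v p i) := by
  exact main_aux 𝒰 hdisj ℒ hlam k a b (ntc ℒ a b z) z hbox hbundle hlambound htotal le_rfl
end

section
/- Let j be a safe client with r_j = r, i.e., d_max(j) ≤ 45·d_av^r(j). Suppose 𝒰 is a family of pairwise disjoint subsets of F, each of volume 1 (y(U) = 1 for U ∈ 𝒰); suppose U_{j,1},…,U_{j,r} are r distinct members of 𝒰 with d_av(j, U_{j,t}) ≤ 2·d_max^t(j) + d_av^t(j) for each t ∈ {1,…,r}; and suppose μ is a probability distribution over subsets S ⊆ F such that Pr[i ∈ S] = y_i for every facility i and |S ∩ U| = 1 almost surely for every U ∈ 𝒰. Then the expected connection cost of j, E_μ[sum of the r smallest values among {d(j,i) : i ∈ S}], is at most 93·r·d_av(j). -/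
open scoped BigOperators

lemma take_sum_eq_getD (l : List ℝ) : ∀ r : ℕ, r ≤ l.length →
    (l.take r).sum = ∑ i ∈ Finset.range r, l.getD i 0 := by
  intro r
  induction r with
  | zero => simp
  | succ n ih =>
    intro h
    have hn : n < l.length := h
    rw [List.sum_take_succ l n hn, ih (le_of_lt hn), Finset.sum_range_succ,
      List.getD_eq_getElem l 0 hn]

lemma take_sorted_sum_le {l l' : List ℝ} (hl : l.Pairwise (· ≤ ·)) (hl' : l'.Pairwise (· ≤ ·))
    (h : List.Sublist l' l) : (l.take l'.length).sum ≤ l'.sum := by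
  obtain ⟨f, hf⟩ := List.sublist_iff_exists_fin_orderEmbedding_get_eq.mp h
  have hlen : l'.length ≤ l.length := h.length_le
  have hfe : ∀ i : Fin l'.length, (i : ℕ) ≤ ((f i : Fin l.length) : ℕ) := by
    intro ⟨n, hn⟩
    induction n with
    | zero => exact Nat.zero_le _
    | succ n ih =>
      have hn' : n < l'.length := Nat.lt_of_succ_lt hn
      have h1 : n ≤ ((f ⟨n, hn'⟩ : Fin l.length) : ℕ) := ih hn'
      have h2 : (f ⟨n, hn'⟩) < f ⟨n + 1, hn⟩ := f.strictMono (by simp [Fin.lt_def])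
      have h3 : ((f ⟨n, hn'⟩ : Fin l.length) : ℕ) < ((f ⟨n+1, hn⟩ : Fin l.length) : ℕ) := h2
      show n + 1 ≤ _
      omega
  rw [take_sum_eq_getD l l'.length hlen]
  have hsum' : l'.sum = ∑ i ∈ Finset.range l'.length, l'.getD i 0 := by
    conv_lhs => rw [← List.take_length (l := l')]
    exact take_sum_eq_getD l' l'.length le_rfl
  rw [hsum']
  apply Finset.sum_le_sum
  intro i hi
  have hi' : i < l'.length := Finset.mem_range.mp hi
  have hil : i < l.length := lt_of_lt_of_le hi' hlen
  rw [List.getD_eq_getElem l 0 hil, List.getD_eq_getElem l' 0 hi']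
  have : l'.get ⟨i, hi'⟩ = l.get (f ⟨i, hi'⟩) := hf ⟨i, hi'⟩
  calc l[i] = l.get ⟨i, hil⟩ := rfl
    _ ≤ l.get (f ⟨i, hi'⟩) := hl.rel_get_of_le (by exact hfe ⟨i, hi'⟩)
    _ = l'.get ⟨i, hi'⟩ := (hf _).symm
    _ = l'[i] := rfl

lemma ksmall_le_submultiset (m m' : Multiset ℝ) (hle : m' ≤ m) :
    ((m.sort (· ≤ ·)).take m'.card).sum ≤ m'.sum := by
  have hsubperm : (m'.sort (· ≤ ·)).Subperm (m.sort (· ≤ ·)) := by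
    rw [← Multiset.coe_le, Multiset.sort_eq, Multiset.sort_eq]
    exact hle
  have hsub : List.Sublist (m'.sort (· ≤ ·)) (m.sort (· ≤ ·)) :=
    List.sublist_of_subperm_of_pairwise hsubperm (Multiset.pairwise_sort _ _)
      (Multiset.pairwise_sort _ _)
  have hcard : m'.card = (m'.sort (· ≤ ·)).length := (Multiset.length_sort _).symm
  have hsum : (m'.sort (· ≤ ·)).sum = m'.sum := by
    conv_rhs => rw [← Multiset.sort_eq m' (· ≤ ·)]
    exact (Multiset.sum_coe _).symm
  rw [hcard, ← hsum]
  exact take_sorted_sum_le (Multiset.pairwise_sort _ _) (Multiset.pairwise_sort _ _) hsub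

namespace FracSol

variable {X : Type*} [MetricSpace X] (s : FracSol X) {j : X}

lemma sum_filter_y_nonneg (hj : j ∈ s.C) (D : ℝ) :
    0 ≤ ∑ i ∈ (s.Fj j).filter (fun i => dist j i ≤ D), s.y i :=
  Finset.sum_nonneg fun i hi =>
    (s.y_pos i (s.Fj_sub j hj (Finset.mem_filter.mp hi).1)).le

lemma filter_empty_of_neg {D : ℝ} (hD : D < 0) :
    (s.Fj j).filter (fun i => dist j i ≤ D) = ∅ := by
  apply Finset.filter_eq_empty_iff.mpr
  intro i _ hdi
  exact absurd (dist_nonneg.trans hdi) (not_le.mpr hD)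

lemma q_nonpos_eq_zero (hj : j ∈ s.C) {x : ℝ} (hx : x ≤ 0) : s.q j x = 0 := by
  have huniv : {D : ℝ | x ≤ ∑ i ∈ (s.Fj j).filter (fun i => dist j i ≤ D), s.y i}
      = Set.univ := Set.eq_univ_of_forall fun D => hx.trans (s.sum_filter_y_nonneg hj D)
  rw [q, huniv]
  apply Real.sInf_of_not_bddBelow
  rintro ⟨b, hb⟩
  have := hb (Set.mem_univ (b - 1))
  linarith

lemma q_nonneg (hj : j ∈ s.C) (x : ℝ) : 0 ≤ s.q j x := by
  rcases le_or_gt x 0 with hx | hx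
  · rw [s.q_nonpos_eq_zero hj hx]
  · apply Real.sInf_nonneg
    intro D hD
    by_contra hD0
    push_neg at hD0
    rw [Set.mem_setOf_eq, s.filter_empty_of_neg hD0, Finset.sum_empty] at hD
    linarith

lemma q_set_nonempty_s9 (hj : j ∈ s.C) {x : ℝ} (hx : x ≤ (s.req j : ℝ)) :
    {D : ℝ | x ≤ ∑ i ∈ (s.Fj j).filter (fun i => dist j i ≤ D), s.y i}.Nonempty := by
  refine ⟨∑ i ∈ s.Fj j, dist j i, ?_⟩
  have hfilter : (s.Fj j).filter (fun i => dist j i ≤ ∑ i' ∈ s.Fj j, dist j i') = s.Fj j :=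
    Finset.filter_true_of_mem fun i hi =>
      Finset.single_le_sum (f := fun i' => dist j i') (fun i' _ => dist_nonneg) hi
  rw [Set.mem_setOf_eq, hfilter, s.Fj_vol j hj]
  exact hx

lemma q_bddBelow {x : ℝ} (hx : 0 < x) :
    BddBelow {D : ℝ | x ≤ ∑ i ∈ (s.Fj j).filter (fun i => dist j i ≤ D), s.y i} := by
  refine ⟨0, fun D hD => ?_⟩
  by_contra hD0
  push_neg at hD0
  rw [Set.mem_setOf_eq, s.filter_empty_of_neg hD0, Finset.sum_empty] at hD
  linarith

lemma q_monotoneOn (hj : j ∈ s.C) : MonotoneOn (s.q j) (Set.Icc 0 ((s.req j : ℝ))) := by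
  rintro x ⟨hx0, _⟩ x' ⟨_, hx'r⟩ hxx'
  rcases eq_or_lt_of_le hx0 with hx0' | hx0'
  · rw [s.q_nonpos_eq_zero hj hx0'.symm.le]
    exact s.q_nonneg hj x'
  · exact csInf_le_csInf (s.q_bddBelow hx0') (s.q_set_nonempty_s9 hj hx'r)
      (fun D hD => le_trans hxx' hD)

lemma q_intervalIntegrable (hj : j ∈ s.C) {a b : ℝ} (h0 : 0 ≤ a) (hab : a ≤ b)
    (hbr : b ≤ (s.req j : ℝ)) :
    IntervalIntegrable (s.q j) MeasureTheory.volume a b :=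
  ((s.q_monotoneOn hj).mono (by
    rw [Set.uIcc_of_le hab]
    exact Set.Icc_subset_Icc h0 hbr)).intervalIntegrable

lemma davT_nonneg (hj : j ∈ s.C) (t : ℕ) : 0 ≤ s.davT j t :=
  intervalIntegral.integral_nonneg (by linarith) fun u _ => s.q_nonneg hj u

lemma sum_davT (hj : j ∈ s.C) {r : ℕ} (hrr : (r : ℝ) ≤ (s.req j : ℝ)) :
    ∑ t ∈ Finset.Icc 1 r, s.davT j t = ∫ u in (0:ℝ)..(r:ℝ), s.q j u := by
  have key : ∑ k ∈ Finset.range r, (∫ x in ((k : ℕ) : ℝ)..(((k + 1 : ℕ)) : ℝ), s.q j x)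
      = ∫ x in ((0 : ℕ) : ℝ)..((r : ℕ) : ℝ), s.q j x :=
    intervalIntegral.sum_integral_adjacent_intervals
      (f := s.q j) (μ := MeasureTheory.volume) (a := fun k => (k : ℝ)) (n := r)
      (fun k hk => s.q_intervalIntegrable hj (by positivity)
        (by push_cast; linarith)
        (by
          have : ((k : ℝ) + 1) ≤ (r : ℝ) := by exact_mod_cast Nat.succ_le_of_lt hk
          push_cast
          linarith))
  rw [Nat.cast_zero] at key
  rw [← key, ← Finset.Ico_add_one_right_eq_Icc, Finset.sum_Ico_eq_sum_range]

  refine Finset.sum_congr rfl fun k _ => ?_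
  rw [davT]
  congr 1 <;> push_cast <;> ring

lemma q_le_davT_succ (hj : j ∈ s.C) {t : ℕ} (ht : t + 1 ≤ s.req j) :
    s.q j (t : ℝ) ≤ s.davT j (t + 1) := by
  have htr : ((t : ℝ) + 1) ≤ (s.req j : ℝ) := by exact_mod_cast ht
  have h2 : s.davT j (t + 1) = ∫ u in (t:ℝ)..((t:ℝ)+1), s.q j u := by
    rw [davT]
    congr 1 <;> push_cast <;> ring
  have h1 : ∫ u in (t:ℝ)..((t:ℝ)+1), s.q j (t : ℝ) ≤ ∫ u in (t:ℝ)..((t:ℝ)+1), s.q j u := by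
    apply intervalIntegral.integral_mono_on (by linarith) intervalIntegrable_const
      (s.q_intervalIntegrable hj (by positivity) (by linarith) htr)
    intro u hu
    exact s.q_monotoneOn hj ⟨Nat.cast_nonneg t, by linarith⟩
      ⟨le_trans (Nat.cast_nonneg t) hu.1, by linarith [hu.2]⟩ hu.1
  rw [intervalIntegral.integral_const] at h1
  simp only [add_sub_cancel_left, one_smul] at h1
  rw [h2]
  exact h1

lemma kSmallestSum_le_sum_subset (j : X) {S T : Finset X} (hT : T ⊆ S) :
    kSmallestSum j S T.card ≤ ∑ i ∈ T, dist j i := by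
  have hle : T.val.map (fun i => dist j i) ≤ S.val.map (fun i => dist j i) :=
    Multiset.map_le_map (Finset.val_le_iff.mpr hT)
  have h := ksmall_le_submultiset (S.val.map (fun i => dist j i))
    (T.val.map (fun i => dist j i)) hle
  rw [Multiset.card_map] at h
  rw [kSmallestSum]
  exact h

end FracSol


open FracSol in
/-- Lemma 6 of the paper: for a safe client `j` (`d_max(j) ≤ 45 d_av^r(j)`), given a family
`𝒰` of disjoint volume-1 bundles, `r` distinct bundles close to `j`, and a distribution `μ`
over subsets of `F` with marginals `y` opening exactly one facility per bundle, the expected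
connection cost of `j` is at most `93 r d_av(j)`. -/
theorem expected_cost_safe_client {X : Type*} [MetricSpace X] [DecidableEq X]
    (s : FracSol X) (j : X) (hj : j ∈ s.C) (r : ℕ) (hr : s.req j = r)
    (hsafe : s.dmax j ≤ 45 * s.davT j r)
    (𝒰 : Finset (Finset X)) (h𝒰F : ∀ U ∈ 𝒰, U ⊆ s.F)
    (h𝒰disj : ∀ U ∈ 𝒰, ∀ U' ∈ 𝒰, U ≠ U' → U ∩ U' = ∅)
    (h𝒰vol : ∀ U ∈ 𝒰, s.vol U = 1)
    (U : ℕ → Finset X) (hUmem : ∀ t : ℕ, 1 ≤ t → t ≤ r → U t ∈ 𝒰)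
    (hUinj : ∀ t t' : ℕ, 1 ≤ t → t ≤ r → 1 ≤ t' → t' ≤ r → U t = U t' → t = t')
    (hUclose : ∀ t : ℕ, 1 ≤ t → t ≤ r → s.davS j (U t) ≤ 2 * s.dmaxT j t + s.davT j t)
    (μ : Finset X → ℝ) (hμ0 : ∀ S : Finset X, 0 ≤ μ S)
    (hμsupp : ∀ S : Finset X, μ S ≠ 0 → S ⊆ s.F)
    (hμ1 : ∑ S ∈ s.F.powerset, μ S = 1)
    (hmarg : ∀ i ∈ s.F, ∑ S ∈ s.F.powerset.filter (fun S => i ∈ S), μ S = s.y i)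
    (hbundle : ∀ U' ∈ 𝒰, ∀ S : Finset X, μ S ≠ 0 → (S ∩ U').card = 1) :
    ∑ S ∈ s.F.powerset, μ S * kSmallestSum j S r ≤ 93 * r * s.dav j := by
  classical
  have hr1 : 1 ≤ r := hr ▸ s.req_pos j hj
  -- pairwise disjointness of the bundles U t
  have hUdisj : ∀ t ∈ Finset.Icc 1 r, ∀ t' ∈ Finset.Icc 1 r, t ≠ t' →
      Disjoint (U t) (U t') := by
    intro t ht t' ht' htt'
    rw [Finset.mem_Icc] at ht ht'
    have hne : U t ≠ U t' := fun h => htt' (hUinj t t' ht.1 ht.2 ht'.1 ht'.2 h)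
    rw [Finset.disjoint_iff_inter_eq_empty]
    exact h𝒰disj _ (hUmem t ht.1 ht.2) _ (hUmem t' ht'.1 ht'.2) hne
  -- Step 1: pointwise bound on the connection cost
  have step1 : ∀ S : Finset X, μ S ≠ 0 →
      kSmallestSum j S r ≤ ∑ t ∈ Finset.Icc 1 r, ∑ i ∈ S ∩ U t, dist j i := by
    intro S hS
    set T : Finset X := (Finset.Icc 1 r).biUnion (fun t => S ∩ U t) with hTdef
    have hTS : T ⊆ S := by
      intro i hi
      rcases Finset.mem_biUnion.mp hi with ⟨t, _, hit⟩
      exact (Finset.mem_inter.mp hit).1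
    have hdisj' : ∀ t ∈ Finset.Icc 1 r, ∀ t' ∈ Finset.Icc 1 r, t ≠ t' →
        Disjoint (S ∩ U t) (S ∩ U t') := fun t ht t' ht' h =>
      (hUdisj t ht t' ht' h).mono Finset.inter_subset_right Finset.inter_subset_right
    have hTcard : T.card = r := by
      rw [hTdef, Finset.card_biUnion hdisj']
      have : ∀ t ∈ Finset.Icc 1 r, (S ∩ U t).card = 1 := by
        intro t ht
        rw [Finset.mem_Icc] at ht
        exact hbundle (U t) (hUmem t ht.1 ht.2) S hS
      rw [Finset.sum_congr rfl this, Finset.sum_const, smul_eq_mul, mul_one,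
        Nat.card_Icc]
      omega
    have h := FracSol.kSmallestSum_le_sum_subset j hTS
    rw [hTcard] at h
    refine h.trans_eq ?_
    exact Finset.sum_biUnion (fun t ht t' ht' htt' =>
      hdisj' t (Finset.mem_coe.mp ht) t' (Finset.mem_coe.mp ht') htt')
  -- Step 2: the expectation of the bound
  have inner : ∀ t ∈ Finset.Icc 1 r,
      ∑ S ∈ s.F.powerset, μ S * ∑ i ∈ S ∩ U t, dist j i
        = ∑ i ∈ U t, dist j i * s.y i := by
    intro t ht
    rw [Finset.mem_Icc] at ht
    have hUF : U t ⊆ s.F := h𝒰F (U t) (hUmem t ht.1 ht.2)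
    calc ∑ S ∈ s.F.powerset, μ S * ∑ i ∈ S ∩ U t, dist j i
        = ∑ S ∈ s.F.powerset, ∑ i ∈ U t, (if i ∈ S then μ S * dist j i else 0) := by
          refine Finset.sum_congr rfl fun S _ => ?_
          rw [show ∑ i ∈ S ∩ U t, dist j i = ∑ i ∈ U t ∩ S, dist j i from by
            rw [Finset.inter_comm], ← Finset.sum_ite_mem, Finset.mul_sum]
          refine Finset.sum_congr rfl fun i _ => ?_
          split <;> simp
      _ = ∑ i ∈ U t, ∑ S ∈ s.F.powerset, (if i ∈ S then μ S * dist j i else 0) :=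
          Finset.sum_comm
      _ = ∑ i ∈ U t, ∑ S ∈ s.F.powerset.filter (fun S => i ∈ S), μ S * dist j i := by
          refine Finset.sum_congr rfl fun i _ => (Finset.sum_filter _ _).symm
      _ = ∑ i ∈ U t, dist j i * s.y i := by
          refine Finset.sum_congr rfl fun i hi => ?_
          rw [← Finset.sum_mul, hmarg i (hUF hi), mul_comm]
  -- Step 3: the per-bundle bound
  have step3 : ∀ t ∈ Finset.Icc 1 r,
      ∑ i ∈ U t, dist j i * s.y i ≤ 2 * s.dmaxT j t + s.davT j t := by
    intro t ht
    rw [Finset.mem_Icc] at ht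
    have hd : s.davS j (U t) = ∑ i ∈ U t, dist j i * s.y i := by
      rw [davS, h𝒰vol (U t) (hUmem t ht.1 ht.2), div_one]
    rw [← hd]
    exact hUclose t ht.1 ht.2
  -- Step 4: the analytic bound
  set I : ℝ := ∫ u in (0:ℝ)..(r:ℝ), s.q j u with hI
  have hreq : (r : ℝ) ≤ (s.req j : ℝ) := by rw [hr]
  have hsumD : ∑ t ∈ Finset.Icc 1 r, s.davT j t = I := s.sum_davT hj hreq
  have hDnn : ∀ t : ℕ, 0 ≤ s.davT j t := s.davT_nonneg hj
  have hInn : 0 ≤ I := by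
    rw [← hsumD]
    exact Finset.sum_nonneg fun t _ => hDnn t
  have hMr : s.dmaxT j r ≤ 45 * s.davT j r := by
    have h := hsafe
    rw [dmax, hr] at h
    exact h
  have hDr : s.davT j r ≤ I := by
    rw [← hsumD]
    exact Finset.single_le_sum (fun t _ => hDnn t) (Finset.mem_Icc.mpr ⟨hr1, le_rfl⟩)
  have hMsum : ∑ t ∈ Finset.Icc 1 r, s.dmaxT j t ≤ 46 * I := by
    have hsplit : ∑ t ∈ Finset.Icc 1 r, s.dmaxT j t
        = ∑ t ∈ Finset.Icc 1 (r - 1), s.dmaxT j t + s.dmaxT j r := by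
      conv_lhs => rw [show r = (r - 1) + 1 by omega]
      rw [Finset.sum_Icc_succ_top (by omega)]
      rw [show r - 1 + 1 = r by omega]
    have hM1 : ∑ t ∈ Finset.Icc 1 (r - 1), s.dmaxT j t
        ≤ ∑ t ∈ Finset.Icc 1 (r - 1), s.davT j (t + 1) := by
      refine Finset.sum_le_sum fun t ht => ?_
      rw [Finset.mem_Icc] at ht
      exact s.q_le_davT_succ hj (by omega)
    have hshift : ∑ t ∈ Finset.Icc 1 (r - 1), s.davT j (t + 1)
        = ∑ t ∈ Finset.Icc 2 r, s.davT j t := by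
      rw [show (2 : ℕ) = 1 + 1 by rfl, show r = (r - 1) + 1 by omega,
        ← Finset.map_add_right_Icc, Finset.sum_map]
      rfl
    have hsub : ∑ t ∈ Finset.Icc 2 r, s.davT j t ≤ I := by
      rw [← hsumD]
      exact Finset.sum_le_sum_of_subset_of_nonneg
        (Finset.Icc_subset_Icc (by omega) le_rfl) (fun t _ _ => hDnn t)
    calc ∑ t ∈ Finset.Icc 1 r, s.dmaxT j t
        = ∑ t ∈ Finset.Icc 1 (r - 1), s.dmaxT j t + s.dmaxT j r := hsplit
      _ ≤ (∑ t ∈ Finset.Icc 2 r, s.davT j t) + 45 * s.davT j r := by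
          refine add_le_add (hM1.trans_eq hshift) hMr
      _ ≤ I + 45 * I := add_le_add hsub (by linarith)
      _ = 46 * I := by ring
  have step4 : ∑ t ∈ Finset.Icc 1 r, (2 * s.dmaxT j t + s.davT j t) ≤ 93 * r * s.dav j := by
    have hdav : s.dav j = (1 / (r : ℝ)) * I := by rw [dav, hr]
    have hrpos : (0 : ℝ) < (r : ℝ) := by exact_mod_cast hr1
    have hrhs : 93 * (r : ℝ) * s.dav j = 93 * I := by
      rw [hdav]
      field_simp
    rw [hrhs, Finset.sum_add_distrib, ← Finset.mul_sum, hsumD]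
    linarith
  -- Assemble
  calc ∑ S ∈ s.F.powerset, μ S * kSmallestSum j S r
      ≤ ∑ S ∈ s.F.powerset, μ S * ∑ t ∈ Finset.Icc 1 r, ∑ i ∈ S ∩ U t, dist j i := by
        refine Finset.sum_le_sum fun S _ => ?_
        by_cases hS : μ S = 0
        · simp [hS]
        · exact mul_le_mul_of_nonneg_left (step1 S hS) (hμ0 S)
    _ = ∑ t ∈ Finset.Icc 1 r, ∑ S ∈ s.F.powerset, μ S * ∑ i ∈ S ∩ U t, dist j i := by
        simp_rw [Finset.mul_sum]
        exact Finset.sum_comm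
    _ = ∑ t ∈ Finset.Icc 1 r, ∑ i ∈ U t, dist j i * s.y i := Finset.sum_congr rfl inner
    _ ≤ ∑ t ∈ Finset.Icc 1 r, (2 * s.dmaxT j t + s.davT j t) := Finset.sum_le_sum step3
    _ ≤ 93 * r * s.dav j := step4
end

section
/- Let j be a dangerous client with r_j = r and d_max(j) > 0, and let B'_j ⊆ F satisfy B_j ⊆ B'_j ⊆ Ball(j, d_max(j)/10). Suppose μ is a probability distribution over subsets S ⊆ F such that: Pr[i ∈ S] = y_i for every facility i; almost surely |S ∩ B'_j| ∈ {r−1, r} with Pr[|S ∩ B'_j| = r−1] = r − y(B'_j); and almost surely S contains at least r facilities within distance 3·d_max(j) of j. Then the expected connection cost of j, E_μ[sum of the r smallest values among {d(j,i) : i ∈ S}], is at most 46·r·d_av(j). -/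
open scoped BigOperators

set_option linter.unusedSectionVars false
set_option linter.unusedVariables false
set_option maxHeartbeats 1000000

section AuxList

private lemma take_sum_le_cons {a : ℝ} {l : List ℝ} (hl : (a :: l).Pairwise (· ≤ ·))
    {n : ℕ} (hn : n ≤ l.length) : ((a :: l).take n).sum ≤ (l.take n).sum := by
  cases n with
  | zero => simp
  | succ m =>
    have hm : m < l.length := hn
    rw [List.take_succ_cons, List.sum_cons, List.sum_take_succ l m hm]
    have ha : a ≤ l[m] := (List.pairwise_cons.mp hl).1 _ (l.getElem_mem hm)
    linarith

private lemma take_sum_le_of_sublist {s l : List ℝ} (h : List.Sublist s l) (hl : l.Pairwise (· ≤ ·)) :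
    (l.take s.length).sum ≤ s.sum := by
  induction h with
  | slnil => simp
  | @cons l₁ l₂ a h ih =>
    have h1 : ((a :: l₂).take l₁.length).sum ≤ (l₂.take l₁.length).sum :=
      take_sum_le_cons hl h.length_le
    exact h1.trans (ih (List.pairwise_cons.mp hl).2)
  | @cons_cons l₁ l₂ a h ih =>
    simp only [List.length_cons, List.take_succ_cons, List.sum_cons]
    exact add_le_add_right (ih (List.pairwise_cons.mp hl).2) a

private lemma take_sum_le_of_subperm {s l : List ℝ} (h : s.Subperm l) (hl : l.Pairwise (· ≤ ·)) :
    (l.take s.length).sum ≤ s.sum := by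
  obtain ⟨s', hperm, hsub⟩ := h
  have := take_sum_le_of_sublist hsub hl
  rwa [hperm.length_eq, hperm.sum_eq] at this

private lemma kSS_le {X : Type*} [MetricSpace X] (j : X) {S T : Finset X} {r : ℕ}
    (hT : T ⊆ S) (hcard : T.card = r) :
    (((S.val.map fun i => dist j i).sort (· ≤ ·)).take r).sum ≤ ∑ i ∈ T, dist j i := by
  set M : Multiset ℝ := S.val.map fun i => dist j i with hM
  set N : Multiset ℝ := T.val.map fun i => dist j i with hN
  have hle : N ≤ M := Multiset.map_le_map (Finset.val_le_iff.mpr hT)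
  have hsp : (N.sort (· ≤ ·)).Subperm (M.sort (· ≤ ·)) := by
    rw [← Multiset.coe_le, Multiset.sort_eq, Multiset.sort_eq]; exact hle
  have hlen : (N.sort (· ≤ ·)).length = r := by
    rw [Multiset.length_sort, hN, Multiset.card_map]; exact hcard
  have := take_sum_le_of_subperm hsp (Multiset.pairwise_sort _ _)
  rw [hlen] at this
  refine this.trans ?_
  have : ((N.sort (· ≤ ·)) : Multiset ℝ).sum = N.sum := by rw [Multiset.sort_eq]
  rw [← Multiset.sum_coe] at *
  simp only [Multiset.sort_eq]
  rfl

end AuxList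

section Qaux
variable {α : Type*} [DecidableEq α] (d y : α → ℝ)

/-- cumulative weight within distance D -/
noncomputable def Wfn (A : Finset α) (D : ℝ) : ℝ := ∑ i ∈ A.filter (fun i => d i ≤ D), y i

/-- quantile function -/
noncomputable def Qfn (A : Finset α) (x : ℝ) : ℝ := sInf {D : ℝ | x ≤ Wfn d y A D}

variable {d y}
variable {A : Finset α}

lemma Wfn_nonneg (hy : ∀ i ∈ A, 0 ≤ y i) (D : ℝ) : 0 ≤ Wfn d y A D :=
  Finset.sum_nonneg fun i hi => hy i (Finset.filter_subset _ _ hi)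

lemma Wfn_mono (hy : ∀ i ∈ A, 0 ≤ y i) {D D' : ℝ} (h : D ≤ D') : Wfn d y A D ≤ Wfn d y A D' :=
  Finset.sum_le_sum_of_subset_of_nonneg
    (fun i hi => by
      simp only [Finset.mem_filter] at hi ⊢
      exact ⟨hi.1, hi.2.trans h⟩)
    (fun i hi _ => hy i (Finset.filter_subset _ _ hi))

lemma Wfn_le_vol (hy : ∀ i ∈ A, 0 ≤ y i) (D : ℝ) : Wfn d y A D ≤ ∑ i ∈ A, y i :=
  Finset.sum_le_sum_of_subset_of_nonneg (Finset.filter_subset _ _)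
    (fun i hi _ => hy i hi)

lemma Qfn_spec (hy : ∀ i ∈ A, 0 ≤ y i) {x : ℝ} (hx : 0 < x) (hxv : x ≤ ∑ i ∈ A, y i) :
    (∃ i ∈ A, Qfn d y A x = d i) ∧ x ≤ Wfn d y A (Qfn d y A x) ∧
      ∀ D, x ≤ Wfn d y A D → Qfn d y A x ≤ D := by
  classical
  -- the set of candidate distances
  set T : Finset α := A.filter (fun i => x ≤ Wfn d y A (d i)) with hT
  have hTne : T.Nonempty := by
    -- A is nonempty and the max-distance element belongs to T
    have hAne : A.Nonempty := by
      rcases Finset.eq_empty_or_nonempty A with h | h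
      · exfalso; rw [h] at hxv; simp at hxv; linarith
      · exact h
    obtain ⟨i0, hi0A, hi0⟩ := A.exists_max_image d hAne
    refine ⟨i0, Finset.mem_filter.mpr ⟨hi0A, ?_⟩⟩
    have : A.filter (fun i => d i ≤ d i0) = A := by
      apply Finset.filter_true_of_mem; exact hi0
    rw [Wfn, this]; exact hxv
  obtain ⟨i1, hi1T, hi1⟩ := T.exists_min_image d hTne
  have hi1A : i1 ∈ A := (Finset.mem_filter.mp hi1T).1
  have hi1W : x ≤ Wfn d y A (d i1) := (Finset.mem_filter.mp hi1T).2
  -- every D in the set is ≥ d i1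
  have hlb : ∀ D, x ≤ Wfn d y A D → d i1 ≤ D := by
    intro D hD
    have hfne : (A.filter (fun i => d i ≤ D)).Nonempty := by
      by_contra h
      rw [Finset.not_nonempty_iff_eq_empty] at h
      rw [Wfn, h, Finset.sum_empty] at hD; linarith
    obtain ⟨i2, hi2f, hi2⟩ := (A.filter (fun i => d i ≤ D)).exists_max_image d hfne
    have hi2A : i2 ∈ A := (Finset.mem_filter.mp hi2f).1
    have hi2D : d i2 ≤ D := (Finset.mem_filter.mp hi2f).2
    have hfeq : A.filter (fun i => d i ≤ D) = A.filter (fun i => d i ≤ d i2) := by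
      ext i; simp only [Finset.mem_filter]
      constructor
      · rintro ⟨hiA, hiD⟩; exact ⟨hiA, hi2 i (Finset.mem_filter.mpr ⟨hiA, hiD⟩)⟩
      · rintro ⟨hiA, hid⟩; exact ⟨hiA, le_trans hid hi2D⟩
    have : x ≤ Wfn d y A (d i2) := by rw [Wfn, ← hfeq]; exact hD
    have : i2 ∈ T := Finset.mem_filter.mpr ⟨hi2A, this⟩
    exact le_trans (hi1 i2 this) hi2D
  have hQ : Qfn d y A x = d i1 := by
    apply le_antisymm
    · exact csInf_le ⟨d i1, fun D hD => hlb D hD⟩ hi1W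
    · exact le_csInf ⟨d i1, hi1W⟩ hlb
  refine ⟨⟨i1, hi1A, hQ⟩, ?_, ?_⟩
  · rw [hQ]; exact hi1W
  · intro D hD; rw [hQ]; exact hlb D hD

lemma Qfn_nonneg (hy : ∀ i ∈ A, 0 ≤ y i) (hd : ∀ i ∈ A, 0 ≤ d i) {x : ℝ} (hx : 0 < x) (hxv : x ≤ ∑ i ∈ A, y i) : 0 ≤ Qfn d y A x := by
  obtain ⟨⟨i, hiA, hQ⟩, -, -⟩ := Qfn_spec hy hx hxv
  rw [hQ]; exact hd i hiA

lemma Qfn_galois (hy : ∀ i ∈ A, 0 ≤ y i) {x : ℝ} (hx : 0 < x) (hxv : x ≤ ∑ i ∈ A, y i) (D : ℝ) :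
    Qfn d y A x ≤ D ↔ x ≤ Wfn d y A D := by
  obtain ⟨-, h1, h2⟩ := Qfn_spec hy hx hxv
  constructor
  · intro h; exact le_trans h1 (Wfn_mono hy h)
  · exact h2 D

lemma Qfn_nonpos (hy : ∀ i ∈ A, 0 ≤ y i) {x : ℝ} (hx : x ≤ 0) : Qfn d y A x = 0 := by
  have : {D : ℝ | x ≤ Wfn d y A D} = Set.univ := by
    ext D; simp only [Set.mem_setOf_eq, Set.mem_univ, iff_true]
    exact le_trans hx (Wfn_nonneg hy D)
  rw [Qfn, this]
  exact Real.sInf_of_not_bddBelow (by simpa using Real.not_bddBelow_univ)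

lemma Qfn_monotoneOn (hy : ∀ i ∈ A, 0 ≤ y i) (hd : ∀ i ∈ A, 0 ≤ d i) : MonotoneOn (Qfn d y A) (Set.Icc 0 (∑ i ∈ A, y i)) := by
  intro x hx x' hx' hxx
  rcases le_or_gt x' 0 with h' | h'
  · rw [Qfn_nonpos hy (le_trans hxx h'), Qfn_nonpos hy h']
  rcases le_or_gt x 0 with h | h
  · rw [Qfn_nonpos hy h]; exact Qfn_nonneg hy hd h' hx'.2
  · refine csInf_le_csInf ?_ ?_ ?_
    · refine ⟨0, fun D hD => ?_⟩
      by_contra hneg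
      push_neg at hneg
      have : A.filter (fun i => d i ≤ D) = ∅ := by
        apply Finset.filter_false_of_mem
        intro i hi; exact not_le.mpr (lt_of_lt_of_le hneg (hd i hi))
      simp only [Set.mem_setOf_eq, Wfn, this, Finset.sum_empty] at hD
      linarith
    · obtain ⟨-, h1, -⟩ := Qfn_spec hy h' hx'.2
      exact ⟨Qfn d y A x', h1⟩
    · intro D hD; exact le_trans hxx hD

lemma Qfn_erase (hy : ∀ i ∈ A, 0 ≤ y i) {i₀ : α} (hi₀ : i₀ ∈ A)
    (hmax : ∀ i ∈ A, d i ≤ d i₀) {x : ℝ} (hx : x ≤ ∑ i ∈ A.erase i₀, y i) :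
    Qfn d y A x = Qfn d y (A.erase i₀) x := by
  have hy' : ∀ i ∈ A.erase i₀, 0 ≤ y i := fun i hi => hy i (Finset.erase_subset _ _ hi)
  rcases le_or_gt x 0 with h | h
  · rw [Qfn_nonpos hy h, Qfn_nonpos hy' h]
  have hset : {D : ℝ | x ≤ Wfn d y A D} = {D : ℝ | x ≤ Wfn d y (A.erase i₀) D} := by
    ext D
    simp only [Set.mem_setOf_eq]
    constructor
    · intro hD
      by_cases hc : d i₀ ≤ D
      · have : (A.erase i₀).filter (fun i => d i ≤ D) = A.erase i₀ := by
          apply Finset.filter_true_of_mem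
          intro i hi
          exact le_trans (hmax i (Finset.erase_subset _ _ hi)) hc
        rw [Wfn, this]; exact hx
      · have heq : A.filter (fun i => d i ≤ D) = (A.erase i₀).filter (fun i => d i ≤ D) := by
          ext i
          simp only [Finset.mem_filter, Finset.mem_erase]
          constructor
          · rintro ⟨hiA, hiD⟩
            refine ⟨⟨?_, hiA⟩, hiD⟩
            rintro rfl; exact hc hiD
          · rintro ⟨⟨-, hiA⟩, hiD⟩; exact ⟨hiA, hiD⟩
        rwa [Wfn, heq] at hD
    · intro hD
      refine le_trans hD ?_
      exact Finset.sum_le_sum_of_subset_of_nonneg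
        (Finset.filter_subset_filter _ (Finset.erase_subset _ _))
        (fun i hi _ => hy i (Finset.filter_subset _ _ hi))
  rw [Qfn, Qfn, hset]

lemma Qfn_top (hy : ∀ i ∈ A, 0 ≤ y i) {i₀ : α} (hi₀ : i₀ ∈ A)
    (hmax : ∀ i ∈ A, d i ≤ d i₀) {x : ℝ}
    (hx1 : ∑ i ∈ A.erase i₀, y i < x) (hx2 : x ≤ ∑ i ∈ A, y i) :
    Qfn d y A x = d i₀ := by
  have hset : {D : ℝ | x ≤ Wfn d y A D} = Set.Ici (d i₀) := by
    ext D
    simp only [Set.mem_setOf_eq, Set.mem_Ici]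
    constructor
    · intro hD
      by_contra hc
      push_neg at hc
      have heq : A.filter (fun i => d i ≤ D) ⊆ A.erase i₀ := by
        intro i hi
        simp only [Finset.mem_filter] at hi
        refine Finset.mem_erase.mpr ⟨?_, hi.1⟩
        rintro rfl; exact absurd hi.2 (not_le.mpr hc)
      have : Wfn d y A D ≤ ∑ i ∈ A.erase i₀, y i :=
        Finset.sum_le_sum_of_subset_of_nonneg heq
          (fun i hi _ => hy i (Finset.erase_subset _ _ hi))
      rw [Wfn] at this hD; linarith
    · intro hD
      have : A.filter (fun i => d i ≤ D) = A := by
        apply Finset.filter_true_of_mem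
        intro i hi; exact le_trans (hmax i hi) hD
      rw [Wfn, this]; exact hx2
  rw [Qfn, hset, csInf_Ici]

lemma Qfn_integral (hy : ∀ i ∈ A, 0 ≤ y i) (hd : ∀ i ∈ A, 0 ≤ d i) :
    ∫ x in (0:ℝ)..(∑ i ∈ A, y i), Qfn d y A x = ∑ i ∈ A, d i * y i := by
  classical
  induction A using Finset.strongInduction with
  | _ A ih =>
    rcases Finset.eq_empty_or_nonempty A with rfl | hAne
    · simp
    obtain ⟨i₀, hi₀A, hmax⟩ := A.exists_max_image d hAne
    set A' : Finset α := A.erase i₀ with hA'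
    have hA'sub : A' ⊂ A := Finset.erase_ssubset hi₀A
    have hy' : ∀ i ∈ A', 0 ≤ y i := fun i hi => hy i (Finset.erase_subset _ _ hi)
    have hd' : ∀ i ∈ A', 0 ≤ d i := fun i hi => hd i (Finset.erase_subset _ _ hi)
    have hvol : ∑ i ∈ A', y i + y i₀ = ∑ i ∈ A, y i := Finset.sum_erase_add A y hi₀A
    have hv'0 : (0:ℝ) ≤ ∑ i ∈ A', y i := Finset.sum_nonneg hy'
    have hv'v : ∑ i ∈ A', y i ≤ ∑ i ∈ A, y i := by
      have := hy i₀ hi₀A; linarith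
    have hv0 : (0:ℝ) ≤ ∑ i ∈ A, y i := le_trans hv'0 hv'v
    have hmono : MonotoneOn (Qfn d y A) (Set.Icc 0 (∑ i ∈ A, y i)) := Qfn_monotoneOn hy hd
    have hint1 : IntervalIntegrable (Qfn d y A) MeasureTheory.volume 0 (∑ i ∈ A', y i) := by
      apply MonotoneOn.intervalIntegrable
      apply hmono.mono
      rw [Set.uIcc_of_le hv'0]
      exact Set.Icc_subset_Icc le_rfl hv'v
    have hint2 : IntervalIntegrable (Qfn d y A) MeasureTheory.volume (∑ i ∈ A', y i) (∑ i ∈ A, y i) := by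
      apply MonotoneOn.intervalIntegrable
      apply hmono.mono
      rw [Set.uIcc_of_le hv'v]
      exact Set.Icc_subset_Icc hv'0 le_rfl
    rw [← intervalIntegral.integral_add_adjacent_intervals hint1 hint2]
    have hpart1 : ∫ x in (0:ℝ)..(∑ i ∈ A', y i), Qfn d y A x = ∑ i ∈ A', d i * y i := by
      rw [← ih A' hA'sub hy' hd']
      apply intervalIntegral.integral_congr
      intro x hx
      rw [Set.uIcc_of_le hv'0] at hx
      rcases eq_or_lt_of_le hx.1 with h0 | h0
      · rw [Qfn_nonpos hy (le_of_eq h0.symm), Qfn_nonpos hy' (le_of_eq h0.symm)]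
      · exact Qfn_erase hy hi₀A hmax hx.2
    have hpart2 : ∫ x in (∑ i ∈ A', y i)..(∑ i ∈ A, y i), Qfn d y A x = d i₀ * y i₀ := by
      have : ∫ x in (∑ i ∈ A', y i)..(∑ i ∈ A, y i), Qfn d y A x
          = ∫ x in (∑ i ∈ A', y i)..(∑ i ∈ A, y i), d i₀ := by
        apply intervalIntegral.integral_congr_ae
        apply MeasureTheory.ae_of_all
        intro x hx
        rw [Set.uIoc_of_le hv'v] at hx
        exact Qfn_top hy hi₀A hmax hx.1 hx.2
      rw [this, intervalIntegral.integral_const, smul_eq_mul]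
      rw [← hvol]; ring
    rw [hpart1, hpart2, ← Finset.sum_erase_add A _ hi₀A]

end Qaux

private lemma kSmallestSum_le_subset {X : Type*} [MetricSpace X] (j : X) {S T : Finset X} {r : ℕ}
    (hT : T ⊆ S) (hcard : T.card = r) :
    FracSol.kSmallestSum j S r ≤ ∑ i ∈ T, dist j i :=
  kSS_le j hT hcard

open FracSol in
/-- Lemma 7 of the paper: for a dangerous client `j` with `B_j ⊆ B'_j ⊆ Ball(j, d_max(j)/10)`,
given a distribution `μ` over subsets of `F` with marginals `y` that almost surely opens
`r-1` or `r` facilities in `B'_j` (with `Pr[r-1 open] = r - y(B'_j)`) and almost surely has at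
least `r` facilities within distance `3 d_max(j)` of `j`, the expected connection cost of `j`
is at most `46 r d_av(j)`. -/
theorem expected_cost_dangerous_client {X : Type*} [MetricSpace X] [DecidableEq X]
    (s : FracSol X) (j : X) (hj : j ∈ s.C) (r : ℕ) (hr : s.req j = r)
    (hd : s.Dangerous j) (hpos : 0 < s.dmax j)
    (B' : Finset X) (hB1 : s.Bset j ⊆ B') (hB2 : B' ⊆ s.ball j (s.dmax j / 10))
    (μ : Finset X → ℝ) (hμ0 : ∀ S : Finset X, 0 ≤ μ S)
    (hμsupp : ∀ S : Finset X, μ S ≠ 0 → S ⊆ s.F)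
    (hμ1 : ∑ S ∈ s.F.powerset, μ S = 1)
    (hmarg : ∀ i ∈ s.F, ∑ S ∈ s.F.powerset.filter (fun S => i ∈ S), μ S = s.y i)
    (hcard : ∀ S : Finset X, μ S ≠ 0 → (S ∩ B').card = r - 1 ∨ (S ∩ B').card = r)
    (hprob : ∑ S ∈ s.F.powerset.filter (fun S => (S ∩ B').card = r - 1), μ S
      = (r : ℝ) - s.vol B')
    (hfar : ∀ S : Finset X, μ S ≠ 0 →
      r ≤ (S.filter (fun i => dist j i ≤ 3 * s.dmax j)).card) :
    ∑ S ∈ s.F.powerset, μ S * kSmallestSum j S r ≤ 46 * r * s.dav j := by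
  classical
  -- Notation
  set dd : X → ℝ := fun i => dist j i with hdd
  set Fj : Finset X := s.Fj j with hFj
  have hqQ : s.q j = Qfn dd s.y Fj := rfl
  have hr1 : 1 ≤ r := hr ▸ s.req_pos j hj
  have hFjF : Fj ⊆ s.F := s.Fj_sub j hj
  have hyF : ∀ i ∈ Fj, 0 ≤ s.y i := fun i hi => (s.y_pos i (hFjF hi)).le
  have hdF : ∀ i ∈ Fj, 0 ≤ dd i := fun i _ => dist_nonneg
  have hvolFj : ∑ i ∈ Fj, s.y i = (r : ℝ) := by rw [← hr]; exact s.Fj_vol j hj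
  have hrpos : (0:ℝ) < r := by exact_mod_cast Nat.lt_of_lt_of_le Nat.zero_lt_one hr1
  have hrle : (r:ℝ) ≤ ∑ i ∈ Fj, s.y i := hvolFj.ge
  set D : ℝ := s.dmax j with hD
  have hDQ : D = Qfn dd s.y Fj (r : ℝ) := by rw [hD, dmax, hr, hqQ]
  -- dmax is attained and is an upper bound on distances in Fj
  obtain ⟨⟨istar, histar, hdistar⟩, hWD, -⟩ := Qfn_spec (A := Fj) (d := dd) hyF hrpos hrle
  rw [← hDQ] at hdistar hWD
  have hall : ∀ i ∈ Fj, dd i ≤ D := by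
    intro i1 hi1
    by_contra hc
    push_neg at hc
    have hsub : Fj.filter (fun i => dd i ≤ D) ⊆ Fj.erase i1 := by
      intro i hi
      simp only [Finset.mem_filter] at hi
      refine Finset.mem_erase.mpr ⟨?_, hi.1⟩
      rintro rfl; exact absurd hi.2 (not_le.mpr hc)
    have h1 : Wfn dd s.y Fj D ≤ ∑ i ∈ Fj.erase i1, s.y i :=
      Finset.sum_le_sum_of_subset_of_nonneg hsub
        (fun i hi _ => hyF i (Finset.erase_subset _ _ hi))
    have h2 : ∑ i ∈ Fj.erase i1, s.y i + s.y i1 = ∑ i ∈ Fj, s.y i :=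
      Finset.sum_erase_add Fj s.y hi1
    have h3 : 0 < s.y i1 := s.y_pos i1 (hFjF hi1)
    rw [hvolFj] at h2
    linarith [hWD]
  -- B' is contained in Fj
  have hB'F : B' ⊆ s.F := fun i hi => Finset.mem_filter.mp (hB2 hi) |>.1
  have hB'near : ∀ i ∈ B', dist i j ≤ D / 10 := by
    intro i hi
    have := Finset.mem_filter.mp (hB2 hi) |>.2
    rwa [hD]
  have hB'Fj : B' ⊆ Fj := by
    intro i hi
    by_contra hni
    have h1 : dist j istar ≤ dist j i := s.Fj_closest j hj istar histar i (hB'F hi) hni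
    have h2 : dist j i = dist i j := dist_comm j i
    have h3 : dist i j ≤ D / 10 := hB'near i hi
    have h4 : dd istar = dist j istar := rfl
    rw [h4] at hdistar
    linarith [hpos.trans_le (le_of_eq hD.symm) |>.le]
  have hDpos : 0 < D := hpos
  -- the tail mass m
  set L : ℝ := D / 15 with hL
  set m : ℝ := (r : ℝ) - Wfn dd s.y Fj L with hm
  have hm0 : 0 ≤ m := by
    have := Wfn_le_vol (A := Fj) (d := dd) (y := s.y) hyF L
    rw [hvolFj] at this; simp only [hm]; linarith
  have hq_gt : ∀ x : ℝ, (r:ℝ) - m < x → x ≤ (r:ℝ) → L < Qfn dd s.y Fj x := by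
    intro x h1 h2
    have hx0 : 0 < x := by
      have := Wfn_nonneg (A := Fj) (d := dd) (y := s.y) hyF L
      simp only [hm] at h1; linarith
    by_contra hle
    push_neg at hle
    have := (Qfn_galois hyF hx0 (h2.trans hrle) L).mp hle
    simp only [hm] at h1; linarith
  -- relation of B' volume to tail mass
  have hWL_le : Wfn dd s.y Fj L ≤ s.vol B' := by
    have hsub : Fj.filter (fun i => dd i ≤ L) ⊆ B' := by
      intro i hi
      simp only [Finset.mem_filter] at hi
      apply hB1
      simp only [Bset, ball, Finset.mem_filter]
      refine ⟨hFjF hi.1, ?_⟩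
      rw [dist_comm, ← hD]
      exact hi.2
    exact Finset.sum_le_sum_of_subset_of_nonneg hsub
      (fun i hi _ => (s.y_pos i (hB'F hi)).le)
  have hPr_le_m : (r:ℝ) - s.vol B' ≤ m := by simp only [hm]; linarith
  have hPr_le_1 : (r:ℝ) - s.vol B' ≤ 1 := by
    rw [← hprob, ← hμ1]
    exact Finset.sum_le_sum_of_subset_of_nonneg (Finset.filter_subset _ _)
      (fun S hS _ => hμ0 S)
  set m' : ℝ := min 1 m with hm'
  have hm'0 : 0 ≤ m' := le_min zero_le_one hm0
  have hm'1 : m' ≤ 1 := min_le_left _ _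
  have hm'm : m' ≤ m := min_le_right _ _
  have hPr_le_m' : (r:ℝ) - s.vol B' ≤ m' := le_min hPr_le_1 hPr_le_m
  -- integrability and integral facts
  have hmono : MonotoneOn (Qfn dd s.y Fj) (Set.Icc 0 (r:ℝ)) := by
    have := Qfn_monotoneOn (A := Fj) (d := dd) (y := s.y) hyF hdF
    rwa [hvolFj] at this
  have hInt : ∀ a b : ℝ, 0 ≤ a → a ≤ b → b ≤ (r:ℝ) →
      IntervalIntegrable (Qfn dd s.y Fj) MeasureTheory.volume a b := by
    intro a b ha hab hbr
    apply MonotoneOn.intervalIntegrable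
    apply hmono.mono
    rw [Set.uIcc_of_le hab]
    exact Set.Icc_subset_Icc ha hbr
  have hInonneg : ∀ a b : ℝ, 0 ≤ a → a ≤ b → b ≤ (r:ℝ) →
      0 ≤ ∫ x in a..b, Qfn dd s.y Fj x := by
    intro a b ha hab hbr
    rw [intervalIntegral.integral_of_le hab]
    apply MeasureTheory.setIntegral_nonneg measurableSet_Ioc
    intro x hx
    exact Qfn_nonneg hyF hdF (lt_of_le_of_lt ha hx.1) ((hx.2.trans hbr).trans hrle)
  have hIoc_bounds : 0 ≤ (r:ℝ) - 1 ∧ (r:ℝ) - 1 ≤ (r:ℝ) - m' ∧ (r:ℝ) - m' ≤ (r:ℝ) := by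
    have : (1:ℝ) ≤ r := by exact_mod_cast hr1
    refine ⟨by linarith, by linarith, by linarith⟩
  obtain ⟨hb1, hb2, hb3⟩ := hIoc_bounds
  -- lower bound on the last-unit average distance
  have hdavT : s.davT j (s.req j) = ∫ x in ((r:ℝ)-1)..(r:ℝ), Qfn dd s.y Fj x := by
    rw [davT, hr, hqQ]
  have htail : m' * L ≤ s.davT j (s.req j) := by
    rw [hdavT]
    rw [← intervalIntegral.integral_add_adjacent_intervals
      (hInt _ _ hb1 hb2 hb3) (hInt _ _ (hb1.trans hb2) hb3 le_rfl)]
    have hpiece : m' * L ≤ ∫ x in ((r:ℝ)-m')..(r:ℝ), Qfn dd s.y Fj x := by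
      have hconst : ∫ x in ((r:ℝ)-m')..(r:ℝ), L = m' * L := by
        rw [intervalIntegral.integral_const, smul_eq_mul]; ring_nf
      rw [← hconst, intervalIntegral.integral_of_le hb3,
        intervalIntegral.integral_of_le hb3]
      apply MeasureTheory.setIntegral_mono_on
      · exact (MeasureTheory.integrableOn_const_iff).mpr (Or.inr (by
          rw [Real.volume_Ioc]; exact ENNReal.ofReal_lt_top))
      · have := hInt _ _ (hb1.trans hb2) hb3 le_rfl
        rw [intervalIntegrable_iff, Set.uIoc_of_le hb3] at this
        exact this
      · exact measurableSet_Ioc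
      · intro x hx
        exact (hq_gt x (by linarith [hx.1, hm'm]) hx.2).le
    have := hInonneg _ _ hb1 hb2 hb3
    linarith
  -- total integral and dav
  have hItot : ∫ x in (0:ℝ)..(r:ℝ), Qfn dd s.y Fj x = ∑ i ∈ Fj, dd i * s.y i := by
    have := Qfn_integral (A := Fj) (d := dd) (y := s.y) hyF hdF
    rwa [hvolFj] at this
  have hrdav : (r:ℝ) * s.dav j = ∫ x in (0:ℝ)..(r:ℝ), Qfn dd s.y Fj x := by
    rw [dav, hr, hqQ]
    field_simp
  have hdavT_le : s.davT j (s.req j) ≤ (r:ℝ) * s.dav j := by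
    rw [hrdav, hdavT,
      ← intervalIntegral.integral_add_adjacent_intervals
        (hInt 0 ((r:ℝ)-1) le_rfl hb1 (by linarith))
        (hInt ((r:ℝ)-1) (r:ℝ) hb1 (by linarith) le_rfl)]
    have := hInonneg 0 ((r:ℝ)-1) le_rfl hb1 (by linarith)
    linarith
  -- per-scenario cost bound
  have hbound : ∀ S ∈ s.F.powerset, μ S * kSmallestSum j S r ≤
      μ S * ((∑ i ∈ S ∩ B', dist j i) +
        (if (S ∩ B').card = r - 1 then 3 * D else 0)) := by
    intro S _
    by_cases hS0 : μ S = 0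
    · rw [hS0]; simp
    apply mul_le_mul_of_nonneg_left _ (hμ0 S)
    rcases hcard S hS0 with hc | hc
    · -- r - 1 facilities open in B'
      rw [if_pos hc]
      have hfarS := hfar S hS0
      have hnotsub : ¬ (S.filter (fun i => dist j i ≤ 3 * D) ⊆ S ∩ B') := by
        intro hsub
        have := Finset.card_le_card hsub
        omega
      obtain ⟨x₀, hx₀f, hx₀n⟩ := Finset.not_subset.mp hnotsub
      have hx₀S : x₀ ∈ S := Finset.mem_filter.mp hx₀f |>.1
      have hx₀d : dist j x₀ ≤ 3 * D := Finset.mem_filter.mp hx₀f |>.2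
      have hTsub : insert x₀ (S ∩ B') ⊆ S :=
        Finset.insert_subset hx₀S Finset.inter_subset_left
      have hTcard : (insert x₀ (S ∩ B')).card = r := by
        rw [Finset.card_insert_of_notMem hx₀n, hc]; omega
      refine (kSmallestSum_le_subset j hTsub hTcard).trans ?_
      rw [Finset.sum_insert hx₀n]
      linarith
    · -- r facilities open in B'
      have hne : (S ∩ B').card ≠ r - 1 := by omega
      rw [if_neg hne, add_zero]
      exact kSmallestSum_le_subset j Finset.inter_subset_left hc
  -- expected cost of the B' part
  have hE1 : ∑ S ∈ s.F.powerset, μ S * (∑ i ∈ S ∩ B', dist j i)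
      = ∑ i ∈ B', dist j i * s.y i := by
    have hsw : ∀ S : Finset X, ∑ i ∈ S ∩ B', dist j i
        = ∑ i ∈ B', (if i ∈ S then dist j i else 0) := by
      intro S
      rw [Finset.inter_comm, ← Finset.filter_mem_eq_inter, Finset.sum_filter]
    calc ∑ S ∈ s.F.powerset, μ S * (∑ i ∈ S ∩ B', dist j i)
        = ∑ S ∈ s.F.powerset, ∑ i ∈ B', (if i ∈ S then μ S * dist j i else 0) := by
          apply Finset.sum_congr rfl
          intro S _
          rw [hsw S, Finset.mul_sum]
          apply Finset.sum_congr rfl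
          intro i _
          by_cases h : i ∈ S <;> simp [h]
      _ = ∑ i ∈ B', ∑ S ∈ s.F.powerset, (if i ∈ S then μ S * dist j i else 0) :=
          Finset.sum_comm
      _ = ∑ i ∈ B', (∑ S ∈ s.F.powerset.filter (fun S => i ∈ S), μ S) * dist j i := by
          apply Finset.sum_congr rfl
          intro i _
          rw [Finset.sum_filter, Finset.sum_mul]
          apply Finset.sum_congr rfl
          intro S _
          by_cases h : i ∈ S <;> simp [h]
      _ = ∑ i ∈ B', dist j i * s.y i := by
          apply Finset.sum_congr rfl
          intro i hi
          rw [hmarg i (hB'F hi), mul_comm]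
  -- expected cost of the extra facility
  have hE2 : ∑ S ∈ s.F.powerset, μ S * (if (S ∩ B').card = r - 1 then 3 * D else 0)
      = ((r:ℝ) - s.vol B') * (3 * D) := by
    rw [← hprob, Finset.sum_filter, Finset.sum_mul]
    apply Finset.sum_congr rfl
    intro S _
    by_cases h : (S ∩ B').card = r - 1 <;> simp [h]
  -- put everything together
  have hB'sum : ∑ i ∈ B', dist j i * s.y i ≤ ∑ i ∈ Fj, dd i * s.y i := by
    apply Finset.sum_le_sum_of_subset_of_nonneg hB'Fj
    intro i hi _
    exact mul_nonneg dist_nonneg (hyF i hi)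
  have hmain : ∑ S ∈ s.F.powerset, μ S * kSmallestSum j S r ≤
      ∑ i ∈ B', dist j i * s.y i + ((r:ℝ) - s.vol B') * (3 * D) := by
    rw [← hE1, ← hE2, ← Finset.sum_add_distrib]
    refine (Finset.sum_le_sum hbound).trans ?_
    apply le_of_eq
    apply Finset.sum_congr rfl
    intro S _
    ring
  have hfinal2 : ((r:ℝ) - s.vol B') * (3 * D) ≤ 45 * s.davT j (s.req j) := by
    have h1 : ((r:ℝ) - s.vol B') * (3 * D) ≤ m' * (3 * D) := by
      apply mul_le_mul_of_nonneg_right hPr_le_m'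
      linarith
    have h2 : m' * (3 * D) = 45 * (m' * L) := by rw [hL]; ring
    linarith
  have hdav_nonneg : 0 ≤ (r:ℝ) * s.dav j := by
    rw [hrdav]; exact hInonneg 0 (r:ℝ) le_rfl hrpos.le le_rfl
  have : ∑ i ∈ Fj, dd i * s.y i = (r:ℝ) * s.dav j := by rw [hrdav, hItot]
  calc ∑ S ∈ s.F.powerset, μ S * kSmallestSum j S r
      ≤ ∑ i ∈ B', dist j i * s.y i + ((r:ℝ) - s.vol B') * (3 * D) := hmain
    _ ≤ (r:ℝ) * s.dav j + 45 * s.davT j (s.req j) := by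
        rw [← this]; linarith
    _ ≤ (r:ℝ) * s.dav j + 45 * ((r:ℝ) * s.dav j) := by linarith
    _ = 46 * r * s.dav j := by ring
end
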